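/- arXiv:0806.1347 — 4 statements merged into one kernel-verified Lean document; each statement's English description precedes it below -/
import Mathlib

section
/- Let W be a random variable with P(W>0)=1, E[W]=1 and E[W log₂ W] < 1, and define φ(s) = s − log₂ E[W^s]. Then φ is continuous on [0,1], strictly monotone increasing on [0,1], and maps [0,1] onto [0,1]. -/
open MeasureTheory ProbabilityTheory Filter Set
open scoped ENNReal NNReal Topology

noncomputable section

/-- **Lemma 3.2.** For a positive random variable `W` with `E[W] = 1` and
`E[W log₂ W] < 1`, the function `φ(s) = s - log₂ E[W^s]` is continuous on `[0,1]`, strictly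
monotone increasing on `[0,1]`, and maps `[0,1]` onto `[0,1]`. -/
theorem phi_continuous_strictMono_onto
    {Ω : Type*} [MeasurableSpace Ω] (P : Measure Ω) [IsProbabilityMeasure P]
    (W : Ω → ℝ) (hWm : Measurable W) (hWpos : ∀ᵐ ω ∂P, 0 < W ω)
    (hWint : Integrable W P) (hWmean : ∫ ω, W ω ∂P = 1)
    (hlogint : Integrable (fun ω => W ω * Real.logb 2 (W ω)) P)
    (hlog : ∫ ω, W ω * Real.logb 2 (W ω) ∂P < 1) :
    ContinuousOn (fun s : ℝ => s - Real.logb 2 (∫ ω, W ω ^ s ∂P)) (Set.Icc 0 1) ∧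
    StrictMonoOn (fun s : ℝ => s - Real.logb 2 (∫ ω, W ω ^ s ∂P)) (Set.Icc 0 1) ∧
    (fun s : ℝ => s - Real.logb 2 (∫ ω, W ω ^ s ∂P)) '' Set.Icc 0 1 = Set.Icc 0 1 := by
  have hlog2 : (0:ℝ) < Real.log 2 := Real.log_pos one_lt_two
  -- pointwise bound for the integrand
  have hbd : ∀ s ∈ Icc (0:ℝ) 1, ∀ᵐ ω ∂P, ‖W ω ^ s‖ ≤ 1 + W ω := by
    intro s hs
    filter_upwards [hWpos] with ω hω
    rw [Real.norm_eq_abs, abs_of_nonneg (Real.rpow_nonneg hω.le s)]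
    rcases le_total (W ω) 1 with h | h
    · have := Real.rpow_le_one hω.le h hs.1
      linarith
    · calc W ω ^ s ≤ W ω ^ (1:ℝ) := Real.rpow_le_rpow_of_exponent_le h hs.2
        _ = W ω := Real.rpow_one _
        _ ≤ 1 + W ω := by linarith
  have hmeas : ∀ s : ℝ, AEStronglyMeasurable (fun ω => W ω ^ s) P := by
    intro s
    exact (hWm.pow measurable_const).aestronglyMeasurable
  -- integrability of W^s
  have hInt : ∀ s ∈ Icc (0:ℝ) 1, Integrable (fun ω => W ω ^ s) P := by
    intro s hs
    exact Integrable.mono' ((integrable_const 1).add hWint) (hmeas s) (hbd s hs)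
  -- positivity of ∫ W^s
  have hIpos : ∀ s ∈ Icc (0:ℝ) 1, 0 < ∫ ω, W ω ^ s ∂P := by
    intro s hs
    have hnn : 0 ≤ᵐ[P] fun ω => W ω ^ s :=
      hWpos.mono fun ω h => (Real.rpow_pos_of_pos h s).le
    rw [integral_pos_iff_support_of_nonneg_ae hnn (hInt s hs)]
    have h1 : ∀ᵐ ω ∂P, ω ∈ Function.support fun ω => W ω ^ s :=
      hWpos.mono fun ω h => (Real.rpow_pos_of_pos h s).ne'
    have h0 : P {ω | ω ∉ Function.support fun ω => W ω ^ s} = 0 := by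
      simpa [ae_iff] using h1
    have h0' : P (Function.support fun ω => W ω ^ s)ᶜ = 0 := by
      rw [Set.compl_def]; exact h0
    by_contra hc
    push_neg at hc
    have hc0 : P (Function.support fun ω => W ω ^ s) = 0 := le_antisymm hc zero_le
    have : (1:ℝ≥0∞) ≤ 0 := by
      calc (1:ℝ≥0∞) = P univ := (measure_univ (μ := P)).symm
        _ = P ((Function.support fun ω => W ω ^ s) ∪ (Function.support fun ω => W ω ^ s)ᶜ) := by
            rw [Set.union_compl_self]
        _ ≤ P (Function.support fun ω => W ω ^ s) + P (Function.support fun ω => W ω ^ s)ᶜ :=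
            measure_union_le _ _
        _ = 0 := by rw [hc0, h0', add_zero]
    simp at this
  -- integrability of W * log W
  have hWlnint : Integrable (fun ω => W ω * Real.log (W ω)) P := by
    have h := hlogint.const_mul (Real.log 2)
    have heq : (fun ω => Real.log 2 * (W ω * Real.logb 2 (W ω)))
        = fun ω => W ω * Real.log (W ω) := by
      funext ω
      rw [Real.logb]
      field_simp
    rwa [heq] at h
  -- integrability of W^b * log W for b ∈ (0,1]
  have hJint : ∀ b ∈ Ioc (0:ℝ) 1, Integrable (fun ω => W ω ^ b * Real.log (W ω)) P := by
    intro b hb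
    have hb0 : 0 < b := hb.1
    refine Integrable.mono'
      (show Integrable (fun ω => 2 / b + |W ω * Real.log (W ω)|) P from
        (integrable_const _).add hWlnint.abs) ?_ ?_
    · exact ((hWm.pow measurable_const).mul (Real.measurable_log.comp hWm)).aestronglyMeasurable
    · filter_upwards [hWpos] with ω hω
      rw [Real.norm_eq_abs, abs_mul, abs_of_nonneg (Real.rpow_nonneg hω.le b)]
      rcases le_total 1 (W ω) with h | h
      · -- W ≥ 1 : W^b |log W| ≤ W log W = |W log W|
        have hl : 0 ≤ Real.log (W ω) := Real.log_nonneg h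
        rw [abs_of_nonneg hl]
        have h1 : W ω ^ b ≤ W ω := by
          calc W ω ^ b ≤ W ω ^ (1:ℝ) := Real.rpow_le_rpow_of_exponent_le h hb.2
            _ = W ω := Real.rpow_one _
        have h2 : W ω ^ b * Real.log (W ω) ≤ W ω * Real.log (W ω) :=
          mul_le_mul_of_nonneg_right h1 hl
        have h3 : W ω * Real.log (W ω) ≤ |W ω * Real.log (W ω)| := le_abs_self _
        have h4 : (0:ℝ) ≤ 2 / b := by positivity
        linarith
      · -- W ≤ 1 : W^b |log W| ≤ 2/b
        have hl : Real.log (W ω) ≤ 0 := Real.log_nonpos hω.le h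
        rw [abs_of_nonpos hl]
        set y := W ω ^ (b / 2) with hy
        have hy0 : 0 < y := Real.rpow_pos_of_pos hω (b / 2)
        have hy1 : y ≤ 1 := Real.rpow_le_one hω.le h (by positivity)
        have hlogy : Real.log y = (b / 2) * Real.log (W ω) := Real.log_rpow hω _
        have hyy : y * y = W ω ^ b := by
          rw [hy, ← Real.rpow_add hω]
          norm_num
        -- -log y ≤ 1/y - 1 ≤ 1/y
        have hly : Real.log y⁻¹ ≤ y⁻¹ - 1 := Real.log_le_sub_one_of_pos (by positivity)
        rw [Real.log_inv] at hly
        have hnl : -Real.log y ≤ y⁻¹ := by linarith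
        have hnl0 : 0 ≤ -Real.log y := by
          have := Real.log_nonpos hy0.le hy1; linarith
        -- W^b * (-log W) = y*y*(2/b)*(-log y) ≤ (2/b)* y ≤ 2/b
        have key : W ω ^ b * (-Real.log (W ω)) = (2 / b) * (y * (y * (-Real.log y))) := by
          rw [← hyy, hlogy]
          field_simp
        have h5 : y * (-Real.log y) ≤ 1 := by
          calc y * (-Real.log y) ≤ y * y⁻¹ := mul_le_mul_of_nonneg_left hnl hy0.le
            _ = 1 := mul_inv_cancel₀ hy0.ne'
        have h6 : y * (y * (-Real.log y)) ≤ 1 := by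
          calc y * (y * (-Real.log y)) ≤ 1 * (y * (-Real.log y)) := by
                apply mul_le_mul_of_nonneg_right hy1 (by positivity)
            _ = y * (-Real.log y) := by ring
            _ ≤ 1 := h5
        have h7 : W ω ^ b * (-Real.log (W ω)) ≤ 2 / b := by
          rw [key]
          calc (2 / b) * (y * (y * (-Real.log y))) ≤ (2 / b) * 1 := by
                apply mul_le_mul_of_nonneg_left h6 (by positivity)
            _ = 2 / b := mul_one _
        have h8 : (0:ℝ) ≤ |W ω * Real.log (W ω)| := abs_nonneg _
        linarith
  -- the core inequality (*)
  have hstar : ∀ a ∈ Icc (0:ℝ) 1, ∀ b ∈ Ioc (0:ℝ) 1,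
      (a - b) * ((∫ ω, W ω ^ b * Real.log (W ω) ∂P) / (∫ ω, W ω ^ b ∂P))
        ≤ Real.log (∫ ω, W ω ^ a ∂P) - Real.log (∫ ω, W ω ^ b ∂P) := by
    intro a ha b hb
    have hb' : b ∈ Icc (0:ℝ) 1 := ⟨hb.1.le, hb.2⟩
    set Ia := ∫ ω, W ω ^ a ∂P with hIa
    set Ib := ∫ ω, W ω ^ b ∂P with hIb
    have hIap : 0 < Ia := hIpos a ha
    have hIbp : 0 < Ib := hIpos b hb'
    set c := Ib / Ia with hc
    have hcp : 0 < c := div_pos hIbp hIap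
    -- pointwise inequality
    have hpt : ∀ᵐ ω ∂P, (a - b) * (W ω ^ b * Real.log (W ω)) + Real.log c * W ω ^ b
        ≤ c * W ω ^ a - W ω ^ b := by
      filter_upwards [hWpos] with ω hω
      have hx : 0 < W ω ^ (a - b) * c := mul_pos (Real.rpow_pos_of_pos hω _) hcp
      have h1 : Real.log (W ω ^ (a - b) * c) ≤ W ω ^ (a - b) * c - 1 :=
        Real.log_le_sub_one_of_pos hx
      rw [Real.log_mul (Real.rpow_pos_of_pos hω _).ne' hcp.ne', Real.log_rpow hω] at h1
      have hWb : 0 < W ω ^ b := Real.rpow_pos_of_pos hω b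
      have h2 := mul_le_mul_of_nonneg_left h1 hWb.le
      have hab : W ω ^ b * W ω ^ (a - b) = W ω ^ a := by
        rw [← Real.rpow_add hω]; ring_nf
      nlinarith [h2, hab]
    -- integrate
    have hL : Integrable (fun ω => (a - b) * (W ω ^ b * Real.log (W ω)) + Real.log c * W ω ^ b) P :=
      ((hJint b hb).const_mul _).add ((hInt b hb').const_mul _)
    have hR : Integrable (fun ω => c * W ω ^ a - W ω ^ b) P :=
      ((hInt a ha).const_mul c).sub (hInt b hb')
    have hint := integral_mono_ae hL hR hpt
    rw [integral_add ((hJint b hb).const_mul _) ((hInt b hb').const_mul _),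
      integral_sub ((hInt a ha).const_mul c) (hInt b hb'),
      integral_const_mul, integral_const_mul, integral_const_mul] at hint
    have hca : c * Ia = Ib := div_mul_cancel₀ _ hIap.ne'
    rw [← hIa, ← hIb, hca] at hint
    have hlogc : Real.log c = Real.log Ib - Real.log Ia := Real.log_div hIbp.ne' hIap.ne'
    rw [hlogc] at hint
    have hJ := hint
    rw [← mul_div_assoc, div_le_iff₀ hIbp]
    nlinarith [hJ]
  -- endpoint values
  have hI0 : (∫ ω, W ω ^ (0:ℝ) ∂P) = 1 := by
    simp [Real.rpow_zero]
  have hI1 : (∫ ω, W ω ^ (1:ℝ) ∂P) = 1 := by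
    simp only [Real.rpow_one]; exact hWmean
  -- J1 < log 2
  set J1 := ∫ ω, W ω * Real.log (W ω) ∂P with hJ1def
  have hJ1eq : (∫ ω, W ω ^ (1:ℝ) * Real.log (W ω) ∂P) = J1 := by
    simp only [Real.rpow_one]
    exact hJ1def.symm
  have hJ1lt : J1 < Real.log 2 := by
    have heq : J1 = Real.log 2 * ∫ ω, W ω * Real.logb 2 (W ω) ∂P := by
      rw [← integral_const_mul, hJ1def]
      congr 1
      funext ω
      rw [Real.logb]
      field_simp
    rw [heq]
    calc Real.log 2 * ∫ ω, W ω * Real.logb 2 (W ω) ∂P < Real.log 2 * 1 := by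
          exact mul_lt_mul_of_pos_left hlog hlog2
      _ = Real.log 2 := mul_one _
  -- key slope bound
  have hkey : ∀ s ∈ Icc (0:ℝ) 1, ∀ t ∈ Icc (0:ℝ) 1, s < t →
      Real.log (∫ ω, W ω ^ t ∂P) - Real.log (∫ ω, W ω ^ s ∂P) ≤ (t - s) * J1 := by
    intro s hs t ht hst
    have h1mem : (1:ℝ) ∈ Ioc (0:ℝ) 1 := ⟨zero_lt_one, le_refl 1⟩
    rcases eq_or_lt_of_le ht.2 with h1 | h1
    · -- t = 1
      have := hstar s hs 1 h1mem
      rw [hI1, hJ1eq, Real.log_one] at this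
      -- (s-1)*(J1/1) ≤ log Is - 0
      simp only [div_one] at this
      rw [h1]
      rw [hI1, Real.log_one]
      nlinarith [this]
    · -- t < 1
      have htI : t ∈ Ioc (0:ℝ) 1 := ⟨lt_of_le_of_lt hs.1 hst, ht.2⟩
      set Jt := ∫ ω, W ω ^ t * Real.log (W ω) ∂P with hJt
      set It := ∫ ω, W ω ^ t ∂P with hIt
      have hA := hstar s hs t htI
      have hB := hstar 1 ⟨zero_le_one, le_refl 1⟩ t htI
      have hC := hstar t ht 1 h1mem
      rw [hI1, Real.log_one] at hB
      rw [hI1, hJ1eq, Real.log_one, div_one] at hC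
      -- hB : (1-t)*(Jt/It) ≤ -log It ; hC : (t-1)*J1 ≤ log It
      -- so Jt/It ≤ J1
      have hfrac : Jt / It ≤ J1 := by
        have h1t : 0 < 1 - t := by linarith
        nlinarith [hB, hC]
      -- hA : (s-t)*(Jt/It) ≤ log Is - log It
      nlinarith [hA, hfrac]
  -- continuity of s ↦ ∫ W^s
  have hIcont : ContinuousOn (fun s : ℝ => ∫ ω, W ω ^ s ∂P) (Icc 0 1) := by
    intro s₀ hs₀
    apply continuousWithinAt_of_dominated (bound := fun ω => 1 + W ω)
    · exact Eventually.of_forall fun s => hmeas s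
    · exact eventually_mem_nhdsWithin.mono fun s hs => hbd s hs
    · exact (integrable_const 1).add hWint
    · filter_upwards [hWpos] with ω hω
      have : (fun s : ℝ => W ω ^ s) = fun s => Real.exp (Real.log (W ω) * s) := by
        funext s; rw [Real.rpow_def_of_pos hω]
      rw [this]
      exact (Real.continuous_exp.comp (continuous_const.mul continuous_id)).continuousWithinAt
  -- continuity of φ
  have hphicont : ContinuousOn (fun s : ℝ => s - Real.logb 2 (∫ ω, W ω ^ s ∂P)) (Icc 0 1) := by
    apply ContinuousOn.sub continuousOn_id
    have hlogcont : ContinuousOn (fun s : ℝ => Real.log (∫ ω, W ω ^ s ∂P)) (Icc 0 1) :=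
      hIcont.log fun s hs => (hIpos s hs).ne'
    have : (fun s : ℝ => Real.logb 2 (∫ ω, W ω ^ s ∂P))
        = fun s => Real.log (∫ ω, W ω ^ s ∂P) / Real.log 2 := by
      funext s; rw [Real.logb]
    rw [this]
    exact hlogcont.div_const _
  -- strict monotonicity of φ
  have hphimono : StrictMonoOn (fun s : ℝ => s - Real.logb 2 (∫ ω, W ω ^ s ∂P)) (Icc 0 1) := by
    intro s hs t ht hst
    have hk := hkey s hs t ht hst
    have h2 : (t - s) * J1 < (t - s) * Real.log 2 :=
      mul_lt_mul_of_pos_left hJ1lt (by linarith)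
    have h3 : Real.log (∫ ω, W ω ^ t ∂P) - Real.log (∫ ω, W ω ^ s ∂P) < (t - s) * Real.log 2 := by
      linarith
    have h4 : Real.logb 2 (∫ ω, W ω ^ t ∂P) - Real.logb 2 (∫ ω, W ω ^ s ∂P) < t - s := by
      rw [Real.logb, Real.logb, div_sub_div_same, div_lt_iff₀ hlog2]
      linarith
    simp only
    linarith
  refine ⟨hphicont, hphimono, ?_⟩
  apply Subset.antisymm
  · rintro x ⟨u, hu, rfl⟩
    have h1 := hphimono.monotoneOn (Set.left_mem_Icc.mpr zero_le_one) hu hu.1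
    have h2 := hphimono.monotoneOn hu (Set.right_mem_Icc.mpr zero_le_one) hu.2
    rw [hI0] at h1
    rw [hI1] at h2
    simp only [Real.logb_one, sub_zero] at h1 h2
    exact ⟨h1, h2⟩
  · have := intermediate_value_Icc (zero_le_one (α := ℝ)) hphicont
    rw [hI0, hI1] at this
    simp only [Real.logb_one, sub_zero] at this
    exact this
end
end

section
/- Assume P(W>0)=1, E[W]=1 and E[W log₂ W] < 1. Then for all x, y ∈ [0,1] and all s ∈ (0,1], E[ρ(x,y)^s] ≤ 8·|x−y|^{φ(s)}, where φ(s) = s − log₂ E[W^s]. -/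
open MeasureTheory ProbabilityTheory Filter Set
open scoped ENNReal NNReal Topology

noncomputable section

/-- The index `k` of the dyadic interval `[k 2^{-j}, (k+1) 2^{-j}]` of level `j` containing `x`
(when `x` is a dyadic point of level `j`, we choose the interval whose maximum is `x`). -/
def dyadIdx (j : ℕ) (x : ℝ) : ℕ := ⌈x * 2 ^ j⌉₊ - 1

/-- The dyadic interval `I_j(x)` of level `j` containing `x`. -/
def dyadInterval (j : ℕ) (x : ℝ) : Set ℝ :=
  Set.Icc ((dyadIdx j x : ℝ) / 2 ^ j) (((dyadIdx j x : ℝ) + 1) / 2 ^ j)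

/-- The cascade density `w_n(x) = ∏_{j<n} W_{I_j(x)}`, where `Wf j k` is the random weight
attached to the `k`-th dyadic interval of level `j`. -/
def cascadeDensity {Ω : Type*} (Wf : ℕ → ℕ → Ω → ℝ) (n : ℕ) (ω : Ω) (x : ℝ) : ℝ :=
  ∏ j ∈ Finset.range n, Wf j (dyadIdx j x) ω

/-- The random measure `μ_n`, having density `w_n` with respect to Lebesgue measure on `[0,1]`. -/
def cascadeMeasure {Ω : Type*} (Wf : ℕ → ℕ → Ω → ℝ) (n : ℕ) (ω : Ω) : Measure ℝ :=
  (volume.restrict (Set.Icc (0:ℝ) 1)).withDensity fun x =>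
    ENNReal.ofReal (cascadeDensity Wf n ω x)

/-- Weak convergence of a sequence of (finite Borel) measures on `ℝ`:
convergence of integrals of all bounded continuous functions. -/
def IsWeakLimit (μs : ℕ → Measure ℝ) (μ : Measure ℝ) : Prop :=
  ∀ f : BoundedContinuousFunction ℝ ℝ,
    Tendsto (fun n => ∫ x, f x ∂(μs n)) atTop (𝓝 (∫ x, f x ∂μ))

lemma measurable_dyadIdx (j : ℕ) : Measurable (dyadIdx j) := by
  have h1 : Measurable fun x : ℝ => ⌈x * 2 ^ j⌉₊ :=
    Nat.measurable_ceil.comp (measurable_id.mul_const _)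
  exact (measurable_of_countable (fun n : ℕ => n - 1)).comp h1

lemma dyadIdx_lt_pow (j : ℕ) {z : ℝ} (hz : z ≤ 1) : dyadIdx j z < 2 ^ j := by
  have h1 : ⌈z * 2 ^ j⌉₊ ≤ 2 ^ j := by
    calc ⌈z * 2 ^ j⌉₊ ≤ ⌈((2:ℝ) ^ j)⌉₊ := by
          apply Nat.ceil_le_ceil
          nlinarith [pow_pos (by norm_num : (0:ℝ) < 2) j]
      _ = 2 ^ j := by
          rw [show ((2:ℝ) ^ j) = ((2 ^ j : ℕ) : ℝ) by push_cast; ring, Nat.ceil_natCast]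
  have h2 : 0 < 2 ^ j := Nat.pow_pos (by norm_num)
  unfold dyadIdx
  omega

lemma dyadIdx_const {m j k : ℕ} (hj : j ≤ m) {z : ℝ}
    (hz : z ∈ Ioc ((k : ℝ) / 2 ^ m) (((k : ℝ) + 1) / 2 ^ m)) :
    dyadIdx j z = k / 2 ^ (m - j) := by
  have h2m : (0:ℝ) < 2 ^ m := by positivity
  have h2j : (0:ℝ) < 2 ^ j := by positivity
  have h2mj : (0:ℝ) < 2 ^ (m - j) := by positivity
  have hsplit : (2:ℝ) ^ m = 2 ^ j * 2 ^ (m - j) := by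
    rw [← pow_add]; congr 1; omega
  set q : ℕ := 2 ^ (m - j) with hq
  have hqpos : 0 < q := Nat.pow_pos (by norm_num)
  have key : ⌈z * 2 ^ j⌉₊ = k / q + 1 := by
    rw [Nat.ceil_eq_iff (Nat.succ_ne_zero _)]
    constructor
    · -- ↑(k/q+1-1) < z * 2^j, i.e., ↑(k/q) < z*2^j
      have h1 : ((k / q : ℕ) : ℝ) * (q:ℝ) ≤ (k:ℝ) := by
        rw [← Nat.cast_mul]
        exact_mod_cast Nat.div_mul_le_self k q
      have hz1 : (k:ℝ) / 2 ^ m < z := hz.1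
      have : ((k / q : ℕ) : ℝ) ≤ (k:ℝ) / (q:ℝ) := by
        rw [le_div_iff₀ (by exact_mod_cast hqpos)]; exact h1
      have hq2 : ((q:ℕ):ℝ) = (2:ℝ) ^ (m - j) := by push_cast [hq]; norm_num
      calc ((k / q + 1 - 1 : ℕ) : ℝ) = ((k / q : ℕ) : ℝ) := by norm_num
        _ ≤ (k:ℝ) / (q:ℝ) := this
        _ = (k:ℝ) / 2 ^ m * 2 ^ j := by
            rw [hq2, hsplit]; field_simp
        _ < z * 2 ^ j := by
            apply mul_lt_mul_of_pos_right hz1 h2j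
    · -- z * 2^j ≤ k/q + 1
      have h1 : (k:ℝ) + 1 ≤ (((k / q + 1) * q : ℕ) : ℝ) := by
        have : k + 1 ≤ (k / q + 1) * q := by
          have h := Nat.div_add_mod k q
          have h2 := Nat.mod_lt k hqpos
          nlinarith [h, h2]
        exact_mod_cast this
      have hq2 : ((q:ℕ):ℝ) = (2:ℝ) ^ (m - j) := by push_cast [hq]; norm_num
      calc z * 2 ^ j ≤ ((k:ℝ) + 1) / 2 ^ m * 2 ^ j := by
            apply mul_le_mul_of_nonneg_right hz.2 h2j.le
        _ ≤ (((k / q + 1) * q : ℕ) : ℝ) / 2 ^ m * 2 ^ j := by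
            apply mul_le_mul_of_nonneg_right _ h2j.le
            gcongr
        _ = ((k / q + 1 : ℕ) : ℝ) := by
            push_cast [hq2]
            rw [hsplit]; field_simp
  unfold dyadIdx
  rw [key]
  simp [hq]

section Meas
variable {Ω : Type*} [MeasurableSpace Ω] (Wf : ℕ → ℕ → Ω → ℝ)
  (hWfm : ∀ n k, Measurable (Wf n k))
include hWfm
set_option linter.unusedSectionVars false

lemma measurable_pair_factor (j : ℕ) :
    Measurable (fun p : Ω × ℝ => Wf j (dyadIdx j p.2) p.1) := by
  have h1 : Measurable (fun q : Ω × ℕ => Wf j q.2 q.1) :=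
    measurable_from_prod_countable_left (fun k => (hWfm j k))
  exact h1.comp (measurable_fst.prodMk ((measurable_dyadIdx j).comp measurable_snd))

lemma measurable_cascadeDensity_pair (n : ℕ) :
    Measurable (fun p : Ω × ℝ => ENNReal.ofReal (cascadeDensity Wf n p.1 p.2)) := by
  apply ENNReal.measurable_ofReal.comp
  unfold cascadeDensity
  exact Finset.measurable_prod _ (fun j _ => measurable_pair_factor Wf hWfm j)

lemma cascadeMeasure_apply (n : ℕ) (ω : Ω) {E : Set ℝ} (hE : MeasurableSet E) :
    cascadeMeasure Wf n ω E
      = ∫⁻ z in E ∩ Icc (0:ℝ) 1, ENNReal.ofReal (cascadeDensity Wf n ω z) := by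
  rw [cascadeMeasure, withDensity_apply _ hE, Measure.restrict_restrict hE]

lemma measurable_cascadeMeasure_apply (n : ℕ) {E : Set ℝ} (hE : MeasurableSet E) :
    Measurable (fun ω => cascadeMeasure Wf n ω E) := by
  simp_rw [cascadeMeasure_apply Wf hWfm n _ hE]
  exact Measurable.lintegral_prod_right' (measurable_cascadeDensity_pair Wf hWfm n)

lemma cascadeDensity_le (n : ℕ) (ω : Ω) {z : ℝ} (hz : z ≤ 1) :
    ENNReal.ofReal (cascadeDensity Wf n ω z)
      ≤ ∏ j ∈ Finset.range n, ∑ k ∈ Finset.range (2 ^ j), ENNReal.ofReal |Wf j k ω| := by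
  calc ENNReal.ofReal (cascadeDensity Wf n ω z)
      ≤ ENNReal.ofReal |cascadeDensity Wf n ω z| :=
        ENNReal.ofReal_le_ofReal (le_abs_self _)
    _ = ∏ j ∈ Finset.range n, ENNReal.ofReal |Wf j (dyadIdx j z) ω| := by
        rw [cascadeDensity, Finset.abs_prod,
          ENNReal.ofReal_prod_of_nonneg (fun i _ => abs_nonneg _)]
    _ ≤ _ := by
        apply Finset.prod_le_prod' 
        intro j _
        exact Finset.single_le_sum (f := fun k => ENNReal.ofReal |Wf j k ω|)
          (fun k _ => zero_le) (Finset.mem_range.mpr (dyadIdx_lt_pow j hz))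

lemma isFiniteMeasure_cascadeMeasure (n : ℕ) (ω : Ω) :
    IsFiniteMeasure (cascadeMeasure Wf n ω) := by
  constructor
  have h1 : cascadeMeasure Wf n ω univ
      = ∫⁻ z in Icc (0:ℝ) 1, ENNReal.ofReal (cascadeDensity Wf n ω z) := by
    rw [cascadeMeasure_apply Wf hWfm n ω MeasurableSet.univ, univ_inter]
  rw [h1]
  set C := ∏ j ∈ Finset.range n, ∑ k ∈ Finset.range (2 ^ j), ENNReal.ofReal |Wf j k ω| with hC
  have h2 : ∫⁻ z in Icc (0:ℝ) 1, ENNReal.ofReal (cascadeDensity Wf n ω z)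
      ≤ ∫⁻ _ in Icc (0:ℝ) 1, C := by
    apply setLIntegral_mono' measurableSet_Icc
    intro z hz
    exact cascadeDensity_le Wf hWfm n ω hz.2
  refine lt_of_le_of_lt h2 ?_
  rw [setLIntegral_const]
  apply ENNReal.mul_lt_top _ (by simp [Real.volume_Icc])
  rw [hC]
  apply ENNReal.prod_lt_top
  intro j _
  exact (ENNReal.sum_lt_top.mpr (fun k _ => ENNReal.ofReal_lt_top))

end Meas

section Aux3
variable {Ω : Type*} [MeasurableSpace Ω] {P : Measure Ω} [IsProbabilityMeasure P]

/-- Jensen-type inequality for `rpow` with exponent in `(0,1]` over a probability measure. -/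
lemma lintegral_rpow_le_rpow_lintegral (f : Ω → ℝ≥0∞) (hf : AEMeasurable f P)
    {s : ℝ} (hs0 : 0 < s) (hs1 : s ≤ 1) :
    ∫⁻ ω, f ω ^ s ∂P ≤ (∫⁻ ω, f ω ∂P) ^ s := by
  rcases eq_or_lt_of_le hs1 with h1 | h1
  · simp [h1]
  have hpq : (1/s).HolderConjugate (1/(1-s)) := by
    exact Real.holderConjugate_one_div hs0 (by linarith) (by ring)
  have key := ENNReal.lintegral_mul_le_Lp_mul_Lq P hpq
    (f := fun ω => f ω ^ s) (g := fun _ => 1)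
    (hf.pow_const s) aemeasurable_const
  simp only [Pi.mul_apply, mul_one, ENNReal.one_rpow, lintegral_const,
    measure_univ, one_mul] at key
  calc ∫⁻ ω, f ω ^ s ∂P ≤ (∫⁻ ω, (f ω ^ s) ^ (1/s) ∂P) ^ (1 / (1/s)) * 1 := by
        simpa using key
    _ = (∫⁻ ω, f ω ∂P) ^ s := by
        rw [mul_one, one_div_one_div]
        congr 1
        refine lintegral_congr fun ω => ?_
        rw [← ENNReal.rpow_mul, mul_one_div, div_self hs0.ne', ENNReal.rpow_one]

/-- The expectation of a product of independent `ℝ≥0∞`-valued random variables factorizes. -/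
lemma lintegral_prod_of_iIndepFun {ι : Type*} {g : ι → Ω → ℝ≥0∞}
    (hg : ∀ i, Measurable (g i))
    (h : iIndepFun g P) (t : Finset ι) :
    ∫⁻ ω, ∏ i ∈ t, g i ω ∂P = ∏ i ∈ t, ∫⁻ ω, g i ω ∂P := by
  classical
  induction t using Finset.induction_on with
  | empty => simp
  | insert a t' ha ih =>
    rw [Finset.prod_insert ha]
    have hind : IndepFun (g a) (∏ j ∈ t', g j) P :=
      (h.indepFun_finset_prod_of_notMem hg ha).symm
    have : ∫⁻ ω, g a ω * (∏ j ∈ t', g j) ω ∂P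
        = (∫⁻ ω, g a ω ∂P) * ∫⁻ ω, (∏ j ∈ t', g j) ω ∂P :=
      lintegral_mul_eq_lintegral_mul_lintegral_of_indepFun (hg a)
        (by rw [Finset.prod_fn]; exact Finset.measurable_prod _ (fun i _ => hg i)) hind
    simp only [Finset.prod_apply] at this
    rw [show (∫⁻ ω, ∏ i ∈ insert a t', g i ω ∂P)
        = ∫⁻ ω, g a ω * ∏ i ∈ t', g i ω ∂P from
        lintegral_congr fun ω => by rw [Finset.prod_insert ha], this, ih]

lemma rpow_liminf_le {u : ℕ → ℝ≥0∞} {s : ℝ} (hs : 0 < s) :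
    (liminf u atTop) ^ s ≤ liminf (fun n => (u n) ^ s) atTop := by
  have hmono : Monotone (fun x : ℝ≥0∞ => x ^ s) :=
    fun a b hab => ENNReal.rpow_le_rpow hab hs.le
  exact le_of_eq (hmono.map_liminf_of_continuousAt u
    (ENNReal.continuous_rpow_const.continuousAt))

end Aux3

lemma rpow_finset_sum_le {ι : Type*} (t : Finset ι) (f : ι → ℝ≥0∞) {s : ℝ}
    (hs0 : 0 < s) (hs1 : s ≤ 1) :
    (∑ i ∈ t, f i) ^ s ≤ ∑ i ∈ t, (f i) ^ s := by
  classical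
  induction t using Finset.induction_on with
  | empty => simp [ENNReal.zero_rpow_of_pos hs0]
  | insert a t' ha ih =>
    rw [Finset.sum_insert ha, Finset.sum_insert ha]
    exact le_trans (ENNReal.rpow_add_le_add_rpow _ _ hs0.le hs1)
      (add_le_add_right ih _)

lemma weaklimit_le_liminf (μs : ℕ → Measure ℝ) (hfin : ∀ n, IsFiniteMeasure (μs n))
    (μ : Measure ℝ) [IsFiniteMeasure μ] (h : IsWeakLimit μs μ) {a b ε : ℝ}
    (hab : a ≤ b) (hε : 0 < ε) :
    μ (Icc a b) ≤ liminf (fun n => μs n (Icc (a - ε) (b + ε))) atTop := by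
  obtain ⟨f, hf0, hf1, hf01⟩ := exists_continuous_zero_one_of_isClosed
    (isOpen_Ioo (a := a - ε) (b := b + ε)).isClosed_compl isClosed_Icc
    (by
      rw [Set.disjoint_left]
      intro z hz hz2
      exact hz ((show Icc a b ⊆ Ioo (a-ε) (b+ε) from
        Icc_subset_Ioo (by linarith) (by linarith)) hz2))
  set F : BoundedContinuousFunction ℝ ℝ :=
    BoundedContinuousFunction.ofNormedAddCommGroup f f.continuous 1
      (fun z => by
        rw [Real.norm_eq_abs, abs_le]
        exact ⟨by linarith [(hf01 z).1], (hf01 z).2⟩) with hFdef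
  have hFval : ∀ z, F z = f z := fun z => rfl
  have key := h F
  have h1 : (μ (Icc a b)).toReal ≤ ∫ z, F z ∂μ := by
    have hind : ∫ z, (Icc a b).indicator (fun _ => (1:ℝ)) z ∂μ = (μ (Icc a b)).toReal := by
      rw [integral_indicator_const _ measurableSet_Icc, smul_eq_mul, mul_one, measureReal_def]
    rw [← hind]
    apply integral_mono
    · exact (integrable_const (1:ℝ)).indicator measurableSet_Icc
    · exact F.integrable μ
    · intro z
      by_cases hz : z ∈ Icc a b
      · rw [indicator_of_mem hz, hFval]
        exact (hf1 hz).symm.le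
      · rw [indicator_of_notMem hz, hFval]
        exact (hf01 z).1
  have h2 : ∀ n, ∫ z, F z ∂(μs n) ≤ ((μs n) (Icc (a - ε) (b + ε))).toReal := by
    intro n
    haveI := hfin n
    have hind : ∫ z, (Icc (a-ε) (b+ε)).indicator (fun _ => (1:ℝ)) z ∂(μs n)
        = ((μs n) (Icc (a-ε) (b+ε))).toReal := by
      rw [integral_indicator_const _ measurableSet_Icc, smul_eq_mul, mul_one, measureReal_def]
    rw [← hind]
    apply integral_mono
    · exact F.integrable _
    · exact (integrable_const (1:ℝ)).indicator measurableSet_Icc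
    · intro z
      by_cases hz : z ∈ Icc (a-ε) (b+ε)
      · rw [indicator_of_mem hz, hFval]
        exact (hf01 z).2
      · rw [indicator_of_notMem hz, hFval]
        have hz2 : z ∈ (Ioo (a-ε) (b+ε))ᶜ := fun hzz => hz (Ioo_subset_Icc_self hzz)
        have := hf0 hz2
        simp only [Pi.zero_apply] at this
        rw [this]
  calc μ (Icc a b) = ENNReal.ofReal ((μ (Icc a b)).toReal) :=
        (ENNReal.ofReal_toReal (measure_ne_top _ _)).symm
    _ ≤ ENNReal.ofReal (∫ z, F z ∂μ) := ENNReal.ofReal_le_ofReal h1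
    _ = liminf (fun n => ENNReal.ofReal (∫ z, F z ∂(μs n))) atTop := by
        have hcomp := ((ENNReal.continuous_ofReal.tendsto _).comp key).liminf_eq
        exact hcomp.symm
    _ ≤ liminf (fun n => μs n (Icc (a - ε) (b + ε))) atTop := by
        refine liminf_le_liminf (Eventually.of_forall fun n => ?_)
          (by isBoundedDefault) (by isBoundedDefault)
        calc ENNReal.ofReal (∫ z, F z ∂(μs n))
            ≤ ENNReal.ofReal (((μs n) (Icc (a-ε) (b+ε))).toReal) :=
              ENNReal.ofReal_le_ofReal (h2 n)
          _ = (μs n) (Icc (a-ε) (b+ε)) := ENNReal.ofReal_toReal (measure_ne_top _ _)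

lemma cover_sub {a b : ℝ} (m : ℕ) (hab : a ≤ b) (hd : b - a ≤ 2 / 2 ^ m) :
    ∃ k0 : ℕ, Icc (a - 1/2^(m+1)) (b + 1/2^(m+1)) ∩ Icc (0:ℝ) 1 ⊆
      ⋃ i ∈ Finset.range 4,
        Icc ((((k0 + i : ℕ)) : ℝ)/2^m) (((((k0 + i : ℕ)) : ℝ) + 1)/2^m) := by
  have h2m : (0:ℝ) < 2 ^ m := by positivity
  set ε : ℝ := 1/2^(m+1) with hε
  have hεpos : 0 < ε := by positivity
  set a' : ℝ := max 0 (a - ε) with ha'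
  have ha'0 : 0 ≤ a' := le_max_left _ _
  refine ⟨⌊a' * 2 ^ m⌋₊, ?_⟩
  rintro z ⟨⟨hz1, hz2⟩, hz0, hz3⟩
  set kz := ⌊z * 2 ^ m⌋₊ with hkz
  have hzm : 0 ≤ z * 2 ^ m := by positivity
  have ha'z : a' ≤ z := max_le hz0 hz1
  have hk0le : ⌊a' * 2 ^ m⌋₊ ≤ kz :=
    Nat.floor_le_floor (by nlinarith)
  have hzup : z * 2 ^ m ≤ a' * 2 ^ m + 3 := by
    have h1 : z - a' ≤ (b + ε) - (a - ε) := by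
      have : a - ε ≤ a' := le_max_right _ _
      linarith
    have h2 : (b + ε) - (a - ε) = (b - a) + 2 * ε := by ring
    have h3 : 2 * ε ≤ 1 / 2 ^ m := by
      rw [hε]
      have hpow : (2:ℝ)^(m+1) = 2 * 2^m := by ring
      rw [hpow]
      have heq : 2 * (1/(2*(2:ℝ)^m)) = 1/2^m := by field_simp
      exact heq.le
    have h4 : z - a' ≤ 3 / 2 ^ m := by
      rw [h2] at h1
      have : (2:ℝ)/2^m + 1/2^m = 3/2^m := by ring
      linarith
    nlinarith [(le_div_iff₀ h2m).mp h4]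
  have hkzup : kz ≤ ⌊a' * 2 ^ m⌋₊ + 3 := by
    calc kz ≤ ⌊a' * 2 ^ m + 3⌋₊ := Nat.floor_le_floor hzup
      _ = ⌊a' * 2 ^ m + (3:ℕ)⌋₊ := by norm_num
      _ = ⌊a' * 2 ^ m⌋₊ + 3 := by
          rw [Nat.floor_add_natCast (by positivity)]
  rw [mem_iUnion₂]
  refine ⟨kz - ⌊a' * 2 ^ m⌋₊, ?_, ?_⟩
  · rw [Finset.mem_range]; omega
  · have hknat : ⌊a' * 2 ^ m⌋₊ + (kz - ⌊a' * 2 ^ m⌋₊) = kz := by omega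
    rw [hknat]
    constructor
    · rw [div_le_iff₀ h2m]
      exact le_trans (Nat.floor_le hzm) (le_of_eq rfl)
    · rw [le_div_iff₀ h2m]
      have := Nat.lt_floor_add_one (z * 2 ^ m)
      push_cast
      push_cast at this
      linarith

section Core
variable {Ω : Type*} [MeasurableSpace Ω] {P : Measure Ω} [IsProbabilityMeasure P]


variable (W : Ω → ℝ) (Wf : ℕ → ℕ → Ω → ℝ)
    (hWm : Measurable W) (hWfm : ∀ n k, Measurable (Wf n k))
    (hWpos : ∀ᵐ ω ∂P, 0 < W ω)
    (hWint : Integrable W P) (hWmean : ∫ ω, W ω ∂P = 1)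
    (hid : ∀ n k, Measure.map (Wf n k) P = Measure.map W P)
    (hiid : iIndepFun (fun p : ℕ × ℕ => Wf p.1 p.2) P)
    {s : ℝ} (hs0 : 0 < s) (hs1 : s ≤ 1)

set_option linter.unusedSectionVars false

section
include hWm hWfm hWpos hid

lemma ae_pos_weights : ∀ᵐ ω ∂P, ∀ j k : ℕ, 0 < Wf j k ω := by
  rw [ae_all_iff]; intro j; rw [ae_all_iff]; intro k
  rw [ae_iff]
  have hset : {ω | ¬ 0 < Wf j k ω} = (Wf j k) ⁻¹' (Iic 0) := by
    ext ω; simp [not_lt]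
  have hsetW : {ω | ¬ 0 < W ω} = W ⁻¹' (Iic 0) := by
    ext ω; simp [not_lt]
  rw [hset, ← Measure.map_apply (hWfm j k) measurableSet_Iic, hid j k,
    Measure.map_apply hWm measurableSet_Iic, ← hsetW]
  exact ae_iff.mp hWpos

omit hWpos in
lemma lint_pow_id (j k : ℕ) :
    ∫⁻ ω, ENNReal.ofReal (Wf j k ω) ^ s ∂P = ∫⁻ ω, ENNReal.ofReal (W ω) ^ s ∂P := by
  have h1 : Measurable (fun r : ℝ => ENNReal.ofReal r ^ s) :=
    ENNReal.measurable_ofReal.pow_const s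
  rw [← lintegral_map h1 (hWfm j k), ← lintegral_map h1 hWm, hid j k]

lemma lint_id (j k : ℕ) (hWint : Integrable W P) (hWmean : ∫ ω, W ω ∂P = 1) :
    ∫⁻ ω, ENNReal.ofReal (Wf j k ω) ∂P = 1 := by
  rw [← lintegral_map ENNReal.measurable_ofReal (hWfm j k), hid j k,
    lintegral_map ENNReal.measurable_ofReal hWm,
    ← ofReal_integral_eq_lintegral_ofReal hWint (hWpos.mono fun ω h => h.le), hWmean,
    ENNReal.ofReal_one]

end

section CoreBound
include hWm hWfm hWpos hWint hWmean hid hiid hs0 hs1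

lemma core_bound (m n k : ℕ) (hmn : m ≤ n) (hk : k < 2 ^ m) :
    ∫⁻ ω, (cascadeMeasure Wf n ω (Icc ((k:ℝ)/2^m) (((k:ℝ)+1)/2^m))) ^ s ∂P
      ≤ (∫⁻ ω, ENNReal.ofReal (W ω) ^ s ∂P) ^ m * (ENNReal.ofReal ((2:ℝ)^m)⁻¹) ^ s := by
  classical
  have h2m : (0:ℝ) < 2 ^ m := by positivity
  set I : Set ℝ := Ioc ((k:ℝ)/2^m) (((k:ℝ)+1)/2^m) with hI
  -- Step A : the measure of the dyadic interval as an integral over I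
  have hsub : Icc ((k:ℝ)/2^m) (((k:ℝ)+1)/2^m) ⊆ Icc (0:ℝ) 1 := by
    apply Icc_subset_Icc
    · positivity
    · rw [div_le_one h2m]
      have : (k:ℝ) + 1 ≤ (2:ℝ)^m := by
        have : ((k+1 : ℕ) : ℝ) ≤ ((2^m : ℕ) : ℝ) := by exact_mod_cast hk
        push_cast at this; linarith
      linarith
  have hA : ∀ ω, cascadeMeasure Wf n ω (Icc ((k:ℝ)/2^m) (((k:ℝ)+1)/2^m))
      = ∫⁻ z in I, ENNReal.ofReal (cascadeDensity Wf n ω z) := by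
    intro ω
    rw [cascadeMeasure_apply Wf hWfm n ω measurableSet_Icc, inter_eq_left.mpr hsub]
    exact (setLIntegral_congr Ioc_ae_eq_Icc).symm
  -- the pieces
  set X : Ω → ℝ≥0∞ := fun ω => ∏ j ∈ Finset.range m,
      ENNReal.ofReal (Wf j (k / 2^(m-j)) ω) with hXdef
  set G : Ω → ℝ → ℝ≥0∞ := fun ω z => ∏ j ∈ Finset.Ico m n,
      ENNReal.ofReal (Wf j (dyadIdx j z) ω) with hGdef
  set R : Ω → ℝ≥0∞ := fun ω => ∫⁻ z in I, G ω z with hRdef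
  have hXfin : ∀ ω, X ω ≠ ⊤ := by
    intro ω
    exact (ENNReal.prod_lt_top (fun j _ => ENNReal.ofReal_lt_top)).ne
  -- Step C : factorization
  have hC : ∀ᵐ ω ∂P, (cascadeMeasure Wf n ω (Icc ((k:ℝ)/2^m) (((k:ℝ)+1)/2^m))) ^ s
      = X ω ^ s * R ω ^ s := by
    filter_upwards [ae_pos_weights W Wf hWm hWfm hWpos hid] with ω hpos
    rw [hA ω]
    have hfac : ∫⁻ z in I, ENNReal.ofReal (cascadeDensity Wf n ω z) = X ω * R ω := by
      have heq : ∀ z ∈ I, ENNReal.ofReal (cascadeDensity Wf n ω z) = X ω * G ω z := by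
        intro z hz
        rw [cascadeDensity, ENNReal.ofReal_prod_of_nonneg
          (fun j _ => (hpos j _).le)]
        rw [← Finset.prod_range_mul_prod_Ico _ hmn]
        congr 1
        apply Finset.prod_congr rfl
        intro j hj
        rw [dyadIdx_const (Finset.mem_range.mp hj).le hz]
      rw [setLIntegral_congr_fun measurableSet_Ioc heq,
        lintegral_const_mul' _ _ (hXfin ω)]
    rw [hfac, ENNReal.mul_rpow_of_nonneg _ _ hs0.le]
  rw [lintegral_congr_ae hC]
  -- Step E : independence
  set S : Finset (ℕ × ℕ) := (Finset.range m) ×ˢ (Finset.range (2^m)) with hS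
  set T : Finset (ℕ × ℕ) := (Finset.Ico m n) ×ˢ (Finset.range (2^n)) with hT
  have hdisj : Disjoint S T := by
    rw [Finset.disjoint_left]
    rintro ⟨j, i⟩ hjS hjT
    rw [hS, Finset.mem_product, Finset.mem_range] at hjS
    rw [hT, Finset.mem_product, Finset.mem_Ico] at hjT
    omega
  have hmeasAll : ∀ p : ℕ × ℕ, Measurable (fun ω => Wf p.1 p.2 ω) := fun p => hWfm p.1 p.2
  set FX : ({p // p ∈ S} → ℝ) → ℝ≥0∞ := fun v => ∏ j ∈ Finset.range m,
      (ENNReal.ofReal (if h : (j, k / 2^(m-j)) ∈ S then v ⟨_, h⟩ else 0)) ^ s with hFX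
  set FR : ({p // p ∈ T} → ℝ) → ℝ≥0∞ := fun v => (∫⁻ z in I, ∏ j ∈ Finset.Ico m n,
      ENNReal.ofReal (if h : (j, dyadIdx j z) ∈ T then v ⟨_, h⟩ else 0)) ^ s with hFR
  have hFXmeas : Measurable FX := by
    apply Finset.measurable_prod
    intro j _
    apply Measurable.pow_const
    apply ENNReal.measurable_ofReal.comp
    by_cases h : (j, k / 2^(m-j)) ∈ S
    · simp only [dif_pos h]; exact measurable_pi_apply _
    · simp only [dif_neg h]; exact measurable_const
  have hFRmeas : Measurable FR := by
    have hjoint : Measurable (fun q : ({p // p ∈ T} → ℝ) × ℝ =>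
        ∏ j ∈ Finset.Ico m n,
          ENNReal.ofReal (if h : (j, dyadIdx j q.2) ∈ T then q.1 ⟨_, h⟩ else 0)) := by
      apply Finset.measurable_prod
      intro j _
      apply ENNReal.measurable_ofReal.comp
      have h1 : Measurable (fun q : ({p // p ∈ T} → ℝ) × ℕ =>
          if h : (j, q.2) ∈ T then q.1 ⟨_, h⟩ else 0) := by
        apply measurable_from_prod_countable_left
        intro i
        by_cases h : (j, i) ∈ T
        · simp only [dif_pos h]
          exact measurable_pi_apply (⟨(j, i), h⟩ : {p // p ∈ T})
        · simp only [dif_neg h]; exact measurable_const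
      exact h1.comp (measurable_fst.prodMk ((measurable_dyadIdx j).comp measurable_snd))
    exact (Measurable.lintegral_prod_right' hjoint).pow_const s
  have hbase := hiid.indepFun_finset S T hdisj hmeasAll
  have hIndep : IndepFun (fun ω => X ω ^ s) (fun ω => R ω ^ s) P := by
    have h1 := hbase.comp hFXmeas hFRmeas
    have hXeq : (FX ∘ fun ω (i : {p // p ∈ S}) => Wf (i:ℕ×ℕ).1 (i:ℕ×ℕ).2 ω)
        = fun ω => X ω ^ s := by
      funext ω
      simp only [Function.comp_apply, hFX, hXdef]
      rw [← ENNReal.prod_rpow_of_nonneg hs0.le]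
      refine Finset.prod_congr rfl fun j hj => ?_
      have hmem : (j, k / 2^(m-j)) ∈ S := by
        rw [hS, Finset.mem_product, Finset.mem_range, Finset.mem_range]
        refine ⟨Finset.mem_range.mp hj, lt_of_le_of_lt (Nat.div_le_self _ _) hk⟩
      rw [dif_pos hmem]
    have hReq : (FR ∘ fun ω (i : {p // p ∈ T}) => Wf (i:ℕ×ℕ).1 (i:ℕ×ℕ).2 ω)
        = fun ω => R ω ^ s := by
      funext ω
      simp only [Function.comp_apply, hFR, hRdef]
      congr 1
      apply setLIntegral_congr_fun measurableSet_Ioc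
      intro z hz
      apply Finset.prod_congr rfl
      intro j hj
      have hz1 : z ≤ 1 := le_trans hz.2 (by
        rw [div_le_one h2m]
        have : ((k+1 : ℕ) : ℝ) ≤ ((2^m : ℕ) : ℝ) := by exact_mod_cast hk
        push_cast at this; linarith)
      have hmem : (j, dyadIdx j z) ∈ T := by
        rw [hT, Finset.mem_product, Finset.mem_range]
        refine ⟨hj, lt_of_lt_of_le (dyadIdx_lt_pow j hz1) ?_⟩
        exact Nat.pow_le_pow_right (by norm_num) (Finset.mem_Ico.mp hj).2.le
      rw [dif_pos hmem]
    rw [← hXeq, ← hReq]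
    exact h1
  have hXmeas : Measurable (fun ω => X ω ^ s) := by
    apply Measurable.pow_const
    exact Finset.measurable_prod _ (fun j _ =>
      ENNReal.measurable_ofReal.comp (hWfm j _))
  have hGmeas : Measurable (fun p : Ω × ℝ => G p.1 p.2) := by
    apply Finset.measurable_prod
    intro j _
    exact ENNReal.measurable_ofReal.comp (measurable_pair_factor Wf hWfm j)
  have hRmeas : Measurable R := by
    rw [hRdef]
    exact Measurable.lintegral_prod_right' hGmeas
  -- Step F
  have hF : ∫⁻ ω, X ω ^ s * R ω ^ s ∂P
      = (∫⁻ ω, X ω ^ s ∂P) * ∫⁻ ω, R ω ^ s ∂P := by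
    exact lintegral_mul_eq_lintegral_mul_lintegral_of_indepFun'' hXmeas.aemeasurable
      (hRmeas.pow_const s).aemeasurable hIndep
  rw [hF]
  -- Step G : ∫⁻ X^s = A^m
  have hG : ∫⁻ ω, X ω ^ s ∂P = (∫⁻ ω, ENNReal.ofReal (W ω) ^ s ∂P) ^ m := by
    have hXs : ∀ ω, X ω ^ s = ∏ p ∈ (Finset.range m).image (fun j => (j, k / 2^(m-j))),
        (ENNReal.ofReal (Wf p.1 p.2 ω)) ^ s := by
      intro ω
      rw [Finset.prod_image (by intro a _ b _ hab; exact (Prod.mk.injEq _ _ _ _ ▸ hab).1)]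
      rw [hXdef, ← ENNReal.prod_rpow_of_nonneg hs0.le]
    simp_rw [hXs]
    have hfact := lintegral_prod_of_iIndepFun (P := P)
      (g := fun (p : ℕ × ℕ) (ω : Ω) => (ENNReal.ofReal (Wf p.1 p.2 ω)) ^ s)
      (fun p => by exact (ENNReal.measurable_ofReal.comp (hWfm p.1 p.2)).pow_const s)
      (hiid.comp (fun p => fun r : ℝ => ENNReal.ofReal r ^ s)
        (fun p => ENNReal.measurable_ofReal.pow_const s))
      ((Finset.range m).image (fun j => (j, k / 2^(m-j))))
    rw [hfact]
    rw [Finset.prod_image (by intro a _ b _ hab; exact (Prod.mk.injEq _ _ _ _ ▸ hab).1)]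
    rw [Finset.prod_congr rfl (fun j _ => lint_pow_id W Wf hWm hWfm hid j _)]
    rw [Finset.prod_const, Finset.card_range]
  rw [hG]
  -- Step H + I
  have hRbound : ∫⁻ ω, R ω ^ s ∂P ≤ (ENNReal.ofReal ((2:ℝ)^m)⁻¹) ^ s := by
    have hJensen := lintegral_rpow_le_rpow_lintegral (P := P) R hRmeas.aemeasurable hs0 hs1
    refine le_trans hJensen ?_
    have hRint : ∫⁻ ω, R ω ∂P = ENNReal.ofReal ((2:ℝ)^m)⁻¹ := by
      rw [hRdef]
      rw [lintegral_lintegral_swap (hGmeas.aemeasurable)]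
      have hinner : ∀ z : ℝ, ∫⁻ ω, G ω z ∂P = 1 := by
        intro z
        rw [hGdef]
        have : ∀ ω, ∏ j ∈ Finset.Ico m n, ENNReal.ofReal (Wf j (dyadIdx j z) ω)
            = ∏ p ∈ (Finset.Ico m n).image (fun j => (j, dyadIdx j z)),
              ENNReal.ofReal (Wf p.1 p.2 ω) := by
          intro ω
          rw [Finset.prod_image (by intro a _ b _ hab; exact (Prod.mk.injEq _ _ _ _ ▸ hab).1)]
        simp_rw [this]
        have hfact2 := lintegral_prod_of_iIndepFun (P := P)
          (g := fun (p : ℕ × ℕ) (ω : Ω) => ENNReal.ofReal (Wf p.1 p.2 ω))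
          (fun p => by exact ENNReal.measurable_ofReal.comp (hWfm p.1 p.2))
          (hiid.comp (fun p => ENNReal.ofReal) (fun p => ENNReal.measurable_ofReal))
          ((Finset.Ico m n).image (fun j => (j, dyadIdx j z)))
        rw [hfact2]
        rw [Finset.prod_image (by intro a _ b _ hab; exact (Prod.mk.injEq _ _ _ _ ▸ hab).1)]
        rw [Finset.prod_congr rfl
          (fun j _ => lint_id W Wf hWm hWfm hWpos hid j _ hWint hWmean)]
        exact Finset.prod_const_one
      simp_rw [hinner]
      rw [setLIntegral_one, hI, Real.volume_Ioc]
      congr 1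
      field_simp
      ring
    rw [hRint]
  exact mul_le_mul_right hRbound _

end CoreBound
end Core


section KeyFinal
variable {Ω : Type*} [MeasurableSpace Ω] {P : Measure Ω} [IsProbabilityMeasure P]
variable (W : Ω → ℝ) (Wf : ℕ → ℕ → Ω → ℝ)
    (hWm : Measurable W) (hWfm : ∀ n k, Measurable (Wf n k))
    (hWpos : ∀ᵐ ω ∂P, 0 < W ω)
    (hWint : Integrable W P) (hWmean : ∫ ω, W ω ∂P = 1)
    (hid : ∀ n k, Measure.map (Wf n k) P = Measure.map W P)
    (hiid : iIndepFun (fun p : ℕ × ℕ => Wf p.1 p.2) P)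
    {s : ℝ} (hs0 : 0 < s) (hs1 : s ≤ 1)

set_option linter.unusedSectionVars false

include hWm hWfm hWpos hWint hWmean hid hiid hs0 hs1 in
lemma key_bound (μlim : Ω → Measure ℝ) [∀ ω, IsFiniteMeasure (μlim ω)]
    (hweak : ∀ᵐ ω ∂P, IsWeakLimit (fun n => cascadeMeasure Wf n ω) (μlim ω))
    {a b : ℝ} (hab : a ≤ b) (m : ℕ) (hd : b - a ≤ 2 / 2 ^ m) :
    ∫⁻ ω, (μlim ω (Icc a b)) ^ s ∂P
      ≤ 4 * ((∫⁻ ω, ENNReal.ofReal (W ω) ^ s ∂P) ^ m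
          * (ENNReal.ofReal ((2:ℝ)^m)⁻¹) ^ s) := by
  classical
  set ε : ℝ := 1/2^(m+1) with hεdef
  have hεpos : (0:ℝ) < ε := by positivity
  set Jε : Set ℝ := Icc (a - ε) (b + ε) with hJε
  set Cm : ℝ≥0∞ := (∫⁻ ω, ENNReal.ofReal (W ω) ^ s ∂P) ^ m
      * (ENNReal.ofReal ((2:ℝ)^m)⁻¹) ^ s with hCm
  obtain ⟨k0, hcover⟩ := cover_sub m hab hd
  have hmeasn : ∀ n, Measurable (fun ω => (cascadeMeasure Wf n ω Jε) ^ s) := fun n =>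
    (measurable_cascadeMeasure_apply Wf hWfm n measurableSet_Icc).pow_const s
  -- step 3 : uniform bound for n ≥ m
  have hstep3 : ∀ n, m ≤ n → ∫⁻ ω, (cascadeMeasure Wf n ω Jε) ^ s ∂P ≤ 4 * Cm := by
    intro n hn
    have hper : ∀ i, i ∈ Finset.range 4 →
        ∫⁻ ω, (cascadeMeasure Wf n ω
          (Icc ((((k0 + i : ℕ)) : ℝ)/2^m) (((((k0 + i : ℕ)) : ℝ) + 1)/2^m))) ^ s ∂P ≤ Cm := by
      intro i _
      by_cases hki : k0 + i < 2 ^ m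
      · exact core_bound W Wf hWm hWfm hWpos hWint hWmean hid hiid hs0 hs1 m n (k0+i) hn hki
      · have hzero : ∀ ω, cascadeMeasure Wf n ω
            (Icc ((((k0 + i : ℕ)) : ℝ)/2^m) (((((k0 + i : ℕ)) : ℝ) + 1)/2^m)) = 0 := by
          intro ω
          rw [cascadeMeasure_apply Wf hWfm n ω measurableSet_Icc]
          apply setLIntegral_measure_zero
          apply measure_mono_null (t := {(1:ℝ)})
          · rintro z ⟨⟨hz1, _⟩, _, hz3⟩
            have h2m : (0:ℝ) < 2^m := by positivity
            have hge : (1:ℝ) ≤ (((k0 + i : ℕ)) : ℝ)/2^m := by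
              rw [le_div_iff₀ h2m]
              have : ((2^m : ℕ):ℝ) ≤ (((k0+i : ℕ)):ℝ) := by exact_mod_cast not_lt.mp hki
              push_cast at this ⊢
              linarith
            simp only [mem_singleton_iff]
            linarith
          · exact measure_singleton 1
        simp only [hzero, ENNReal.zero_rpow_of_pos hs0, lintegral_zero]
        exact zero_le
    have hωb : ∀ ω, (cascadeMeasure Wf n ω Jε) ^ s ≤ ∑ i ∈ Finset.range 4,
        (cascadeMeasure Wf n ω
          (Icc ((((k0 + i : ℕ)) : ℝ)/2^m) (((((k0 + i : ℕ)) : ℝ) + 1)/2^m))) ^ s := by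
      intro ω
      have h1 : cascadeMeasure Wf n ω Jε ≤ ∑ i ∈ Finset.range 4,
          cascadeMeasure Wf n ω
            (Icc ((((k0 + i : ℕ)) : ℝ)/2^m) (((((k0 + i : ℕ)) : ℝ) + 1)/2^m)) := by
        have hJint : cascadeMeasure Wf n ω Jε = cascadeMeasure Wf n ω (Jε ∩ Icc 0 1) := by
          rw [cascadeMeasure_apply Wf hWfm n ω measurableSet_Icc,
            cascadeMeasure_apply Wf hWfm n ω (measurableSet_Icc.inter measurableSet_Icc),
            inter_assoc, inter_self]
        rw [hJint]
        calc cascadeMeasure Wf n ω (Jε ∩ Icc 0 1)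
            ≤ cascadeMeasure Wf n ω (⋃ i ∈ Finset.range 4,
                Icc ((((k0 + i : ℕ)) : ℝ)/2^m) (((((k0 + i : ℕ)) : ℝ) + 1)/2^m)) :=
              measure_mono hcover
          _ ≤ ∑ i ∈ Finset.range 4, cascadeMeasure Wf n ω
                (Icc ((((k0 + i : ℕ)) : ℝ)/2^m) (((((k0 + i : ℕ)) : ℝ) + 1)/2^m)) :=
              measure_biUnion_finset_le _ _
      calc (cascadeMeasure Wf n ω Jε) ^ s
          ≤ (∑ i ∈ Finset.range 4, cascadeMeasure Wf n ω
              (Icc ((((k0 + i : ℕ)) : ℝ)/2^m) (((((k0 + i : ℕ)) : ℝ) + 1)/2^m))) ^ s :=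
            ENNReal.rpow_le_rpow h1 hs0.le
        _ ≤ _ := rpow_finset_sum_le _ _ hs0 hs1
    calc ∫⁻ ω, (cascadeMeasure Wf n ω Jε) ^ s ∂P
        ≤ ∫⁻ ω, ∑ i ∈ Finset.range 4, (cascadeMeasure Wf n ω
            (Icc ((((k0 + i : ℕ)) : ℝ)/2^m) (((((k0 + i : ℕ)) : ℝ) + 1)/2^m))) ^ s ∂P :=
          lintegral_mono hωb
      _ = ∑ i ∈ Finset.range 4, ∫⁻ ω, (cascadeMeasure Wf n ω
            (Icc ((((k0 + i : ℕ)) : ℝ)/2^m) (((((k0 + i : ℕ)) : ℝ) + 1)/2^m))) ^ s ∂P :=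
          lintegral_finset_sum _ (fun i _ =>
            (measurable_cascadeMeasure_apply Wf hWfm n measurableSet_Icc).pow_const s)
      _ ≤ ∑ _i ∈ Finset.range 4, Cm := Finset.sum_le_sum hper
      _ = 4 * Cm := by
          rw [Finset.sum_const, Finset.card_range, nsmul_eq_mul]
          norm_num
  -- step 1 : pointwise liminf bound
  have hstep1 : ∀ᵐ ω ∂P, (μlim ω (Icc a b)) ^ s
      ≤ liminf (fun n => (cascadeMeasure Wf n ω Jε) ^ s) atTop := by
    filter_upwards [hweak] with ω hω
    have h1 := weaklimit_le_liminf (fun n => cascadeMeasure Wf n ω)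
      (fun n => isFiniteMeasure_cascadeMeasure Wf hWfm n ω) (μlim ω) hω hab hεpos
    calc (μlim ω (Icc a b)) ^ s
        ≤ (liminf (fun n => cascadeMeasure Wf n ω Jε) atTop) ^ s :=
          ENNReal.rpow_le_rpow h1 hs0.le
      _ ≤ liminf (fun n => (cascadeMeasure Wf n ω Jε) ^ s) atTop := rpow_liminf_le hs0
  calc ∫⁻ ω, (μlim ω (Icc a b)) ^ s ∂P
      ≤ ∫⁻ ω, liminf (fun n => (cascadeMeasure Wf n ω Jε) ^ s) atTop ∂P :=
        lintegral_mono_ae hstep1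
    _ ≤ liminf (fun n => ∫⁻ ω, (cascadeMeasure Wf n ω Jε) ^ s ∂P) atTop :=
        lintegral_liminf_le' (fun n => (hmeasn n).aemeasurable)
    _ ≤ 4 * Cm := by
        have hev : ∀ᶠ n in atTop,
            (∫⁻ ω, (cascadeMeasure Wf n ω Jε) ^ s ∂P) ≤ 4 * Cm :=
          eventually_atTop.mpr ⟨m, hstep3⟩
        calc liminf (fun n => ∫⁻ ω, (cascadeMeasure Wf n ω Jε) ^ s ∂P) atTop
            ≤ liminf (fun _ => 4 * Cm) atTop :=
              liminf_le_liminf hev (by isBoundedDefault) (by isBoundedDefault)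
          _ = 4 * Cm := liminf_const _

end KeyFinal

/-- **Lemma 3.3.** For all `x, y ∈ [0,1]` and `s ∈ (0,1]`,
`E[ρ(x,y)^s] ≤ 8 |x-y|^{φ(s)}`, where `φ(s) = s - log₂ E[W^s]` and `ρ(x,y) = μ([x∧y, x∨y])`. -/
theorem cascade_metric_moment_bound
    {Ω : Type*} [MeasurableSpace Ω] (P : Measure Ω) [IsProbabilityMeasure P]
    (W : Ω → ℝ) (Wf : ℕ → ℕ → Ω → ℝ)
    (hWm : Measurable W) (hWfm : ∀ n k, Measurable (Wf n k))
    (hWpos : ∀ᵐ ω ∂P, 0 < W ω)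
    (hWint : Integrable W P) (hWmean : ∫ ω, W ω ∂P = 1)
    (hid : ∀ n k, Measure.map (Wf n k) P = Measure.map W P)
    (hiid : iIndepFun (fun p : ℕ × ℕ => Wf p.1 p.2) P)
    (hlogint : Integrable (fun ω => W ω * Real.logb 2 (W ω)) P)
    (hlog : ∫ ω, W ω * Real.logb 2 (W ω) ∂P < 1)
    (μlim : Ω → Measure ℝ) [∀ ω, IsFiniteMeasure (μlim ω)]
    (hweak : ∀ᵐ ω ∂P, IsWeakLimit (fun n => cascadeMeasure Wf n ω) (μlim ω))
    (x y : ℝ) (hx : x ∈ Set.Icc (0:ℝ) 1) (hy : y ∈ Set.Icc (0:ℝ) 1)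
    (s : ℝ) (hs : s ∈ Set.Ioc (0:ℝ) 1) :
    ∫⁻ ω, (μlim ω (Set.Icc (min x y) (max x y))) ^ s ∂P
      ≤ ENNReal.ofReal (8 * |x - y| ^ (s - Real.logb 2 (∫ ω, W ω ^ s ∂P))) := by
  classical
  obtain ⟨hs0, hs1⟩ := hs
  set a : ℝ := min x y with hadef
  set b : ℝ := max x y with hbdef
  have hab : a ≤ b := min_le_max
  have hd_eq : b - a = |x - y| := (max_sub_min_eq_abs x y).trans (abs_sub_comm y x)
  set A : ℝ := ∫ ω, W ω ^ s ∂P with hAdef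
  -- integrability of W^s
  have hWs_nonneg : ∀ᵐ ω ∂P, 0 ≤ W ω ^ s := hWpos.mono fun ω h => Real.rpow_nonneg h.le s
  have hWs_int : Integrable (fun ω => W ω ^ s) P := by
    apply Integrable.mono' ((integrable_const (1:ℝ)).add hWint)
    · exact (hWm.pow_const s).aestronglyMeasurable
    · filter_upwards [hWpos] with ω h
      simp only [Pi.add_apply]
      rw [Real.norm_eq_abs, abs_of_nonneg (Real.rpow_nonneg h.le s)]
      rcases le_or_gt (W ω) 1 with hle | hgt
      · have := Real.rpow_le_one h.le hle hs0.le
        linarith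
      · have h2 : W ω ^ s ≤ W ω ^ (1:ℝ) :=
          Real.rpow_le_rpow_of_exponent_le hgt.le hs1
        rw [Real.rpow_one] at h2
        linarith
  have hAe : ∫⁻ ω, ENNReal.ofReal (W ω) ^ s ∂P = ENNReal.ofReal A := by
    have hae : (fun ω => ENNReal.ofReal (W ω) ^ s)
        =ᵐ[P] (fun ω => ENNReal.ofReal (W ω ^ s)) :=
      hWpos.mono fun ω h => ENNReal.ofReal_rpow_of_nonneg h.le hs0.le
    rw [lintegral_congr_ae hae, hAdef,
      ofReal_integral_eq_lintegral_ofReal hWs_int hWs_nonneg]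
  -- positivity of A
  have hWpos_meas : P {ω | 0 < W ω} = 1 := by
    show P (W ⁻¹' (Ioi 0)) = 1
    rw [← prob_compl_eq_zero_iff (hWm measurableSet_Ioi)]
    have : (W ⁻¹' (Ioi 0))ᶜ = {ω | ¬ (0 < W ω)} := by ext ω; simp
    rw [this]
    exact ae_iff.mp hWpos
  have hApos : 0 < A := by
    rw [hAdef, integral_pos_iff_support_of_nonneg_ae hWs_nonneg hWs_int]
    have hsub : {ω | 0 < W ω} ⊆ Function.support fun ω => W ω ^ s := by
      intro ω h
      exact (Real.rpow_pos_of_pos h s).ne'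
    calc (0:ℝ≥0∞) < 1 := zero_lt_one
      _ = P {ω | 0 < W ω} := hWpos_meas.symm
      _ ≤ P (Function.support fun ω => W ω ^ s) := measure_mono hsub
  -- A ≤ 1 (Jensen)
  have hA1 : A ≤ 1 := by
    have hup : ∫⁻ ω, ENNReal.ofReal (W ω) ^ s ∂P ≤ 1 := by
      calc ∫⁻ ω, ENNReal.ofReal (W ω) ^ s ∂P
          ≤ (∫⁻ ω, ENNReal.ofReal (W ω) ∂P) ^ s :=
            lintegral_rpow_le_rpow_lintegral (P := P) _
              (ENNReal.measurable_ofReal.comp hWm).aemeasurable hs0 hs1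
        _ = 1 := by
            rw [← ofReal_integral_eq_lintegral_ofReal hWint
              (hWpos.mono fun ω h => h.le), hWmean, ENNReal.ofReal_one,
              ENNReal.one_rpow]
    rw [hAe] at hup
    exact ENNReal.ofReal_le_one.mp hup
  set φ : ℝ := s - Real.logb 2 A with hφdef
  have hlogb_nonpos : Real.logb 2 A ≤ 0 := by
    rw [Real.logb]
    apply div_nonpos_of_nonpos_of_nonneg
    · exact Real.log_nonpos hApos.le hA1
    · exact (Real.log_pos (by norm_num)).le
  have hφpos : 0 < φ := by rw [hφdef]; linarith
  -- the Cm identity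
  have hCm : ∀ m : ℕ, (ENNReal.ofReal A) ^ m * (ENNReal.ofReal ((2:ℝ)^m)⁻¹) ^ s
      = ENNReal.ofReal ((((2:ℝ)^m)⁻¹) ^ φ) := by
    intro m
    have h2m : (0:ℝ) < 2^m := by positivity
    rw [← ENNReal.ofReal_pow hApos.le,
      ENNReal.ofReal_rpow_of_nonneg (by positivity) hs0.le,
      ← ENNReal.ofReal_mul (by positivity)]
    congr 1
    have hbase : ((2:ℝ)^m)⁻¹ = (2:ℝ) ^ (-(m:ℝ)) := by
      rw [← Real.rpow_natCast 2 m, ← Real.rpow_neg (by norm_num)]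
    have hA2 : (2:ℝ) ^ Real.logb 2 A = A :=
      Real.rpow_logb (by norm_num) (by norm_num) hApos
    rw [hbase]
    rw [← Real.rpow_mul (by norm_num : (0:ℝ) ≤ 2), ← Real.rpow_mul (by norm_num : (0:ℝ) ≤ 2)]
    rw [← hA2, ← Real.rpow_natCast ((2:ℝ) ^ Real.logb 2 A) m,
      ← Real.rpow_mul (by norm_num : (0:ℝ) ≤ 2)]
    rw [← Real.rpow_add (by norm_num : (0:ℝ) < 2)]
    congr 1
    rw [hφdef]
    ring
  have hKEY : ∀ m : ℕ, b - a ≤ 2 / 2 ^ m →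
      ∫⁻ ω, (μlim ω (Icc a b)) ^ s ∂P
        ≤ 4 * ENNReal.ofReal ((((2:ℝ)^m)⁻¹) ^ φ) := by
    intro m hm
    have h := key_bound W Wf hWm hWfm hWpos hWint hWmean hid hiid hs0 hs1 μlim hweak
      hab m hm
    rw [hAe, hCm m] at h
    exact h
  by_cases hxy : x = y
  · -- degenerate case
    have habs : |x - y| = 0 := by rw [hxy, sub_self, abs_zero]
    rw [habs, Real.zero_rpow hφpos.ne', mul_zero, ENNReal.ofReal_zero]
    have hm : ∀ m : ℕ, b - a ≤ 2 / 2 ^ m := by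
      intro m
      rw [hd_eq, habs]
      positivity
    have hb : ∀ m : ℕ, ∫⁻ ω, (μlim ω (Icc a b)) ^ s ∂P
        ≤ 4 * ENNReal.ofReal ((((2:ℝ)^m)⁻¹) ^ φ) := fun m => hKEY m (hm m)
    have hc : ∀ m : ℕ, ENNReal.ofReal ((((2:ℝ)^m)⁻¹) ^ φ)
        = (ENNReal.ofReal ((2:ℝ)⁻¹ ^ φ)) ^ m := by
      intro m
      rw [← ENNReal.ofReal_pow (by positivity)]
      congr 1
      rw [← inv_pow, ← Real.rpow_natCast ((2:ℝ)⁻¹) m,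
        ← Real.rpow_mul (by norm_num : (0:ℝ) ≤ 2⁻¹),
        ← Real.rpow_natCast ((2:ℝ)⁻¹ ^ φ) m,
        ← Real.rpow_mul (by norm_num : (0:ℝ) ≤ 2⁻¹), mul_comm]
    have htend : Tendsto (fun m : ℕ => 4 * ENNReal.ofReal ((((2:ℝ)^m)⁻¹) ^ φ))
        atTop (𝓝 0) := by
      simp_rw [hc]
      have h1 : Tendsto (fun m : ℕ => (ENNReal.ofReal ((2:ℝ)⁻¹ ^ φ)) ^ m) atTop (𝓝 0) := by
        apply ENNReal.tendsto_pow_atTop_nhds_zero_of_lt_one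
        exact ENNReal.ofReal_lt_one.mpr
          (Real.rpow_lt_one (by norm_num) (by norm_num) hφpos)
      have h2 := ENNReal.Tendsto.const_mul h1 (Or.inr (by norm_num : (4:ℝ≥0∞) ≠ ⊤))
      simpa using h2
    exact ge_of_tendsto' htend hb
  · -- main case
    have hdpos : 0 < |x - y| := abs_pos.mpr (sub_ne_zero.mpr hxy)
    have hdle1 : |x - y| ≤ 1 := by
      rw [abs_sub_le_iff]
      obtain ⟨hx1, hx2⟩ := hx
      obtain ⟨hy1, hy2⟩ := hy
      constructor <;> linarith
    have hQex : ∃ m : ℕ, ((2:ℝ)^m)⁻¹ ≤ |x - y| := by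
      obtain ⟨n, hn⟩ := exists_pow_lt_of_lt_one hdpos (by norm_num : (2:ℝ)⁻¹ < 1)
      exact ⟨n, by rw [← inv_pow]; exact hn.le⟩
    set m : ℕ := Nat.find hQex with hmdef
    have hm1 : ((2:ℝ)^m)⁻¹ ≤ |x - y| := Nat.find_spec hQex
    have hm2 : b - a ≤ 2 / 2 ^ m := by
      rw [hd_eq]
      rcases Nat.eq_zero_or_pos m with hm0 | hmpos
      · rw [hm0]
        norm_num
        linarith
      · have hnot := Nat.find_min hQex (m := m - 1) (by omega)
        push_neg at hnot
        have h1 : |x - y| < ((2:ℝ) ^ (m-1))⁻¹ := hnot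
        have h2 : ((2:ℝ) ^ (m-1))⁻¹ = 2 / 2 ^ m := by
          have : (2:ℝ) ^ m = 2 * 2 ^ (m - 1) := by
            rw [← pow_succ']
            congr 1
            omega
          rw [this]
          field_simp
        linarith
    calc ∫⁻ ω, (μlim ω (Icc a b)) ^ s ∂P
        ≤ 4 * ENNReal.ofReal ((((2:ℝ)^m)⁻¹) ^ φ) := hKEY m hm2
      _ ≤ 4 * ENNReal.ofReal (|x - y| ^ φ) := by
          apply mul_le_mul_right
          apply ENNReal.ofReal_le_ofReal
          exact Real.rpow_le_rpow (by positivity) hm1 hφpos.le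
      _ ≤ ENNReal.ofReal (8 * |x - y| ^ φ) := by
          have h4 : (4:ℝ≥0∞) * ENNReal.ofReal (|x - y| ^ φ)
              = ENNReal.ofReal (4 * |x - y| ^ φ) := by
            rw [ENNReal.ofReal_mul (by norm_num : (0:ℝ) ≤ 4)]
            congr 1
            simp
          rw [h4]
          apply ENNReal.ofReal_le_ofReal
          have := Real.rpow_nonneg (abs_nonneg (x - y)) φ
          linarith
end
end

section
/- Let Z₁ and Z₂ be independent, identically distributed, nonnegative, integrable random variables such that E[max(Z₁, Z₂)] = E[Z₁] + E[Z₂]. Then Z₁ = 0 almost surely. -/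
open MeasureTheory ProbabilityTheory Filter Set
open scoped ENNReal NNReal Topology

/-- **key step of Lemma A.2.** If `Z₁` and `Z₂` are independent, identically
distributed, nonnegative, integrable random variables with
`E[max(Z₁,Z₂)] = E[Z₁] + E[Z₂]`, then `Z₁ = 0` almost surely. -/
theorem iid_max_expectation_eq_sum_imp_zero
    {Ω : Type*} [MeasurableSpace Ω] (P : Measure Ω) [IsProbabilityMeasure P]
    (Z₁ Z₂ : Ω → ℝ) (h1 : Measurable Z₁) (h2 : Measurable Z₂)
    (hpos1 : ∀ᵐ ω ∂P, 0 ≤ Z₁ ω) (hpos2 : ∀ᵐ ω ∂P, 0 ≤ Z₂ ω)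
    (hint1 : Integrable Z₁ P) (hint2 : Integrable Z₂ P)
    (hindep : IndepFun Z₁ Z₂ P)
    (hide : Measure.map Z₁ P = Measure.map Z₂ P)
    (hmax : ∫ ω, max (Z₁ ω) (Z₂ ω) ∂P = (∫ ω, Z₁ ω ∂P) + ∫ ω, Z₂ ω ∂P) :
    ∀ᵐ ω ∂P, Z₁ ω = 0 := by
  -- min Z₁ Z₂ has integral 0
  have hintmin : Integrable (fun ω => min (Z₁ ω) (Z₂ ω)) P := hint1.inf hint2
  have hintmax : Integrable (fun ω => max (Z₁ ω) (Z₂ ω)) P := hint1.sup hint2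
  have hkey : ∀ ω, min (Z₁ ω) (Z₂ ω) = Z₁ ω + Z₂ ω - max (Z₁ ω) (Z₂ ω) := by
    intro ω
    rcases le_total (Z₁ ω) (Z₂ ω) with h | h <;>
      simp [min_eq_left, min_eq_right, max_eq_left, max_eq_right, h] <;> ring
  have hintzero : ∫ ω, min (Z₁ ω) (Z₂ ω) ∂P = 0 := by
    calc ∫ ω, min (Z₁ ω) (Z₂ ω) ∂P
        = ∫ ω, (Z₁ ω + Z₂ ω - max (Z₁ ω) (Z₂ ω)) ∂P := by
          exact integral_congr_ae (Eventually.of_forall hkey)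
      _ = (∫ ω, (Z₁ ω + Z₂ ω) ∂P) - ∫ ω, max (Z₁ ω) (Z₂ ω) ∂P :=
          integral_sub (hint1.add hint2) hintmax
      _ = 0 := by rw [integral_add hint1 hint2, hmax]; ring
  have hminpos : 0 ≤ᵐ[P] fun ω => min (Z₁ ω) (Z₂ ω) := by
    filter_upwards [hpos1, hpos2] with ω a b
    exact le_min a b
  have hmin0 : ∀ᵐ ω ∂P, min (Z₁ ω) (Z₂ ω) = 0 := by
    have := (integral_eq_zero_iff_of_nonneg_ae hminpos hintmin).mp hintzero
    filter_upwards [this] with ω h using h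
  -- a.e., Z₁ = 0 or Z₂ = 0
  have hor : ∀ᵐ ω ∂P, Z₁ ω ≤ 0 ∨ Z₂ ω ≤ 0 := by
    filter_upwards [hmin0] with ω h
    rcases le_total (Z₁ ω) (Z₂ ω) with hc | hc
    · left; rw [min_eq_left hc] at h; exact h.le
    · right; rw [min_eq_right hc] at h; exact h.le
  -- so the event {Z₁ > 0} ∩ {Z₂ > 0} has measure zero
  have hset : P (Z₁ ⁻¹' Set.Ioi 0 ∩ Z₂ ⁻¹' Set.Ioi 0) = 0 := by
    have hle : P ((Z₁ ⁻¹' Set.Ioi 0 ∩ Z₂ ⁻¹' Set.Ioi 0)) ≤ P {ω | ¬ (Z₁ ω ≤ 0 ∨ Z₂ ω ≤ 0)} := by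
      apply measure_mono
      intro ω hω
      simp only [Set.mem_inter_iff, Set.mem_preimage, Set.mem_Ioi] at hω
      simp only [Set.mem_setOf_eq, not_or, not_le]
      exact hω
    have h0 : P {ω | ¬ (Z₁ ω ≤ 0 ∨ Z₂ ω ≤ 0)} = 0 := hor
    exact le_antisymm (h0 ▸ hle) zero_le
  have hmul := hindep.measure_inter_preimage_eq_mul (Set.Ioi 0) (Set.Ioi 0)
    measurableSet_Ioi measurableSet_Ioi
  have heq : P (Z₁ ⁻¹' Set.Ioi 0) = P (Z₂ ⁻¹' Set.Ioi 0) := by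
    have := congrArg (fun μ => μ (Set.Ioi (0:ℝ))) hide
    simpa [Measure.map_apply h1 measurableSet_Ioi,
      Measure.map_apply h2 measurableSet_Ioi] using this
  rw [hmul, ← heq] at hset
  have hzero : P (Z₁ ⁻¹' Set.Ioi 0) = 0 := by
    have := mul_self_eq_zero.mp hset
    exact this
  have hle1 : ∀ᵐ ω ∂P, Z₁ ω ≤ 0 := by
    rw [ae_iff]
    convert hzero using 2
    ext ω
    simp [not_le]
  filter_upwards [hpos1, hle1] with ω a b using le_antisymm b a
end

section
/- Let W be a random variable with P(W>0)=1, E[W]=1 and E[W log₂ W] < 1. Then for every ζ₀ ∈ [0,1] there exists a unique ζ ∈ [0,1] satisfying 2^{ζ₀} = 2^{ζ} / E[W^{ζ}] (equivalently, φ(ζ) = ζ₀ where φ(s) = s − log₂ E[W^s]). -/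
open MeasureTheory ProbabilityTheory Filter Set
open scoped ENNReal NNReal Topology

noncomputable section

/-- For a positive random variable `W` with `E[W] = 1` and `E[W log₂ W] < 1`,
for every `ζ₀ ∈ [0,1]` there is a unique `ζ ∈ [0,1]` with `2^{ζ₀} = 2^{ζ} / E[W^{ζ}]`. -/
theorem KPZ_equation_unique_solution
    {Ω : Type*} [MeasurableSpace Ω] (P : Measure Ω) [IsProbabilityMeasure P]
    (W : Ω → ℝ) (hWm : Measurable W) (hWpos : ∀ᵐ ω ∂P, 0 < W ω)
    (hWint : Integrable W P) (hWmean : ∫ ω, W ω ∂P = 1)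
    (hlogint : Integrable (fun ω => W ω * Real.logb 2 (W ω)) P)
    (hlog : ∫ ω, W ω * Real.logb 2 (W ω) ∂P < 1) :
    ∀ ζ₀ ∈ Set.Icc (0:ℝ) 1,
      ∃! ζ : ℝ, ζ ∈ Set.Icc (0:ℝ) 1 ∧ (2:ℝ) ^ ζ₀ = 2 ^ ζ / ∫ ω, W ω ^ ζ ∂P := by
  have hW0 : ∀ᵐ ω ∂P, 0 ≤ W ω := hWpos.mono fun ω h => h.le
  have hbound_int : Integrable (fun ω => 1 + W ω) P := (integrable_const 1).add hWint
  -- integrability of W^ζ and (W/2)^ζ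
  have hint : ∀ ζ ∈ Icc (0:ℝ) 1, Integrable (fun ω => W ω ^ ζ) P := by
    intro ζ hζ
    refine Integrable.mono hbound_int (hWm.pow_const ζ).aestronglyMeasurable ?_
    filter_upwards [hWpos] with ω hω
    rw [Real.norm_eq_abs, abs_of_nonneg (Real.rpow_nonneg hω.le _), Real.norm_eq_abs,
      abs_of_nonneg (by linarith)]
    rcases le_total (W ω) 1 with h | h
    · have := Real.rpow_le_one hω.le h hζ.1
      linarith
    · have h2 : W ω ^ ζ ≤ W ω ^ (1:ℝ) := Real.rpow_le_rpow_of_exponent_le h hζ.2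
      rw [Real.rpow_one] at h2; linarith
  have hint2 : ∀ ζ ∈ Icc (0:ℝ) 1, Integrable (fun ω => (W ω / 2) ^ ζ) P := by
    intro ζ hζ
    refine Integrable.mono hbound_int ((hWm.div_const 2).pow_const ζ).aestronglyMeasurable ?_
    filter_upwards [hWpos] with ω hω
    have hw2 : (0:ℝ) < W ω / 2 := by linarith
    rw [Real.norm_eq_abs, abs_of_nonneg (Real.rpow_nonneg hw2.le _), Real.norm_eq_abs,
      abs_of_nonneg (by linarith)]
    rcases le_total (W ω / 2) 1 with h | h
    · have := Real.rpow_le_one hw2.le h hζ.1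
      linarith
    · have h2 : (W ω / 2) ^ ζ ≤ (W ω / 2) ^ (1:ℝ) := Real.rpow_le_rpow_of_exponent_le h hζ.2
      rw [Real.rpow_one] at h2; linarith
  set h : ℝ → ℝ := fun ζ => ∫ ω, (W ω / 2) ^ ζ ∂P with hh
  have h_eq : ∀ ζ : ℝ, h ζ = (∫ ω, W ω ^ ζ ∂P) / 2 ^ ζ := by
    intro ζ
    have : (fun ω => (W ω / 2) ^ ζ) =ᵐ[P] fun ω => W ω ^ ζ / 2 ^ ζ := by
      filter_upwards [hW0] with ω h0
      exact Real.div_rpow h0 (by norm_num) ζ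
    show (∫ ω, (W ω / 2) ^ ζ ∂P) = (∫ ω, W ω ^ ζ ∂P) / 2 ^ ζ
    rw [integral_congr_ae this, integral_div]
  have h_zero : h 0 = 1 := by
    simp [hh, Real.rpow_zero]
  have h_one : h 1 = 1/2 := by
    simp only [hh, Real.rpow_one]
    rw [integral_div, hWmean]
  have hGpos : ∀ ζ ∈ Icc (0:ℝ) 1, 0 < ∫ ω, W ω ^ ζ ∂P := by
    intro ζ hζ
    rw [integral_pos_iff_support_of_nonneg_ae
      (hW0.mono fun ω h0 => Real.rpow_nonneg h0 ζ) (hint ζ hζ)]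
    have : P (Function.support fun ω => W ω ^ ζ) = 1 := by
      refine le_antisymm prob_le_one ?_
      have : (univ : Set Ω) ≤ᵐ[P] Function.support fun ω => W ω ^ ζ := by
        filter_upwards [hWpos] with ω hω _
        exact (Real.rpow_pos_of_pos hω ζ).ne'
      simpa using measure_mono_ae this
    rw [this]; norm_num
  -- continuity of h on [0,1]
  have hcont : ContinuousOn h (Icc 0 1) := by
    intro x hx
    apply continuousWithinAt_of_dominated (bound := fun ω => 1 + W ω)
    · exact Eventually.of_forall fun ζ => ((hWm.div_const 2).pow_const ζ).aestronglyMeasurable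
    · filter_upwards [eventually_mem_nhdsWithin] with ζ hζ
      filter_upwards [hWpos] with ω hω
      have hw2 : (0:ℝ) < W ω / 2 := by linarith
      rw [Real.norm_eq_abs, abs_of_nonneg (Real.rpow_nonneg hw2.le _)]
      rcases le_total (W ω / 2) 1 with h | h
      · have := Real.rpow_le_one hw2.le h hζ.1
        linarith
      · have h2 : (W ω / 2) ^ ζ ≤ (W ω / 2) ^ (1:ℝ) := Real.rpow_le_rpow_of_exponent_le h hζ.2
        rw [Real.rpow_one] at h2; linarith
    · exact hbound_int
    · filter_upwards [hWpos] with ω hω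
      have hw2 : (0:ℝ) < W ω / 2 := by linarith
      exact (Real.continuousAt_const_rpow hw2.ne' (b := x)).continuousWithinAt
  -- convexity of h on [0,1]
  have hconv : ConvexOn ℝ (Icc (0:ℝ) 1) h := by
    refine ⟨convex_Icc _ _, ?_⟩
    intro s hs t ht a b ha hb hab
    simp only [smul_eq_mul]
    have hmem : a * s + b * t ∈ Icc (0:ℝ) 1 := (convex_Icc (0:ℝ) 1) hs ht ha hb hab
    have key : ∀ᵐ ω ∂P, (W ω / 2) ^ (a * s + b * t) ≤
        a * (W ω / 2) ^ s + b * (W ω / 2) ^ t := by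
      filter_upwards [hWpos] with ω hω
      have hw2 : (0:ℝ) < W ω / 2 := by linarith
      have hexp := convexOn_exp.2 (mem_univ (s * Real.log (W ω / 2)))
        (mem_univ (t * Real.log (W ω / 2))) ha hb hab
      simp only [smul_eq_mul] at hexp
      rw [Real.rpow_def_of_pos hw2, Real.rpow_def_of_pos hw2, Real.rpow_def_of_pos hw2]
      calc Real.exp (Real.log (W ω / 2) * (a * s + b * t))
          = Real.exp (a * (s * Real.log (W ω / 2)) + b * (t * Real.log (W ω / 2))) := by
            ring_nf
        _ ≤ a * Real.exp (s * Real.log (W ω / 2)) + b * Real.exp (t * Real.log (W ω / 2)) :=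
            hexp
        _ = a * Real.exp (Real.log (W ω / 2) * s) + b * Real.exp (Real.log (W ω / 2) * t) := by
            ring_nf
    calc h (a * s + b * t) ≤ ∫ ω, (a * (W ω / 2) ^ s + b * (W ω / 2) ^ t) ∂P := by
          exact integral_mono_ae (hint2 _ hmem)
            (((hint2 s hs).const_mul a).add ((hint2 t ht).const_mul b)) key
      _ = a * h s + b * h t := by
          rw [integral_add ((hint2 s hs).const_mul a) ((hint2 t ht).const_mul b),
            integral_const_mul, integral_const_mul]
  -- log integrand in natural log
  have hlog_eq : (fun ω => W ω * Real.log (W ω))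
      = fun ω => (W ω * Real.logb 2 (W ω)) * Real.log 2 := by
    funext ω
    rw [Real.logb]
    have : Real.log 2 ≠ 0 := by positivity
    field_simp
  have hlogWint : Integrable (fun ω => W ω * Real.log (W ω)) P := by
    rw [hlog_eq]; exact hlogint.mul_const _
  set I : ℝ := ∫ ω, W ω * Real.log (W ω) ∂P with hI
  have hIlt : I < Real.log 2 := by
    have : I = (∫ ω, W ω * Real.logb 2 (W ω) ∂P) * Real.log 2 := by
      rw [hI, hlog_eq, integral_mul_const]
    rw [this]
    have h2 : (0:ℝ) < Real.log 2 := by positivity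
    nlinarith
  -- key lower bound : 1/2 < h a for a ∈ [0,1)
  have hkey : ∀ a ∈ Ico (0:ℝ) 1, 1/2 < h a := by
    intro a ha
    have haIcc : a ∈ Icc (0:ℝ) 1 := ⟨ha.1, ha.2.le⟩
    set c : ℝ := (a - 1) * I with hc
    have hpoint : ∀ᵐ ω ∂P, Real.exp c * (W ω + (a-1) * (W ω * Real.log (W ω)) - c * W ω)
        ≤ W ω ^ a := by
      filter_upwards [hWpos] with ω hω
      have hWa : W ω ^ a = W ω * Real.exp ((a-1) * Real.log (W ω)) := by
        have h1 : W ω * Real.exp ((a-1) * Real.log (W ω))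
            = Real.exp (Real.log (W ω)) * Real.exp ((a-1) * Real.log (W ω)) := by
          rw [Real.exp_log hω]
        rw [Real.rpow_def_of_pos hω, h1, ← Real.exp_add]
        congr 1
        ring
      have htangent : Real.exp c * (1 + ((a-1) * Real.log (W ω) - c))
          ≤ Real.exp ((a-1) * Real.log (W ω)) := by
        have := Real.add_one_le_exp ((a-1) * Real.log (W ω) - c)
        calc Real.exp c * (1 + ((a-1) * Real.log (W ω) - c))
            ≤ Real.exp c * Real.exp ((a-1) * Real.log (W ω) - c) := by
              have := Real.exp_pos c
              nlinarith
          _ = Real.exp ((a-1) * Real.log (W ω)) := by rw [← Real.exp_add]; ring_nf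
      rw [hWa]
      calc Real.exp c * (W ω + (a-1) * (W ω * Real.log (W ω)) - c * W ω)
          = W ω * (Real.exp c * (1 + ((a-1) * Real.log (W ω) - c))) := by ring
        _ ≤ W ω * Real.exp ((a-1) * Real.log (W ω)) := by
            apply mul_le_mul_of_nonneg_left htangent hω.le
    have hLHSint : Integrable
        (fun ω => Real.exp c * (W ω + (a-1) * (W ω * Real.log (W ω)) - c * W ω)) P := by
      apply Integrable.const_mul
      exact (hWint.add (hlogWint.const_mul _)).sub (hWint.const_mul _)
    have hints : Real.exp c ≤ ∫ ω, W ω ^ a ∂P := by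
      have int1 : Integrable (fun ω => (a-1) * (W ω * Real.log (W ω))) P :=
        hlogWint.const_mul _
      have int2 : Integrable (fun ω => W ω + (a-1) * (W ω * Real.log (W ω))) P :=
        hWint.add int1
      have int3 : Integrable (fun ω => c * W ω) P := hWint.const_mul _
      have hsum : ∫ ω, (W ω + (a-1) * (W ω * Real.log (W ω)) - c * W ω) ∂P = 1 := by
        rw [integral_sub int2 int3, integral_add hWint int1, integral_const_mul,
          integral_const_mul, hWmean, ← hI, hc]
        ring
      have hmono := integral_mono_ae hLHSint (hint a haIcc) hpoint
      rw [integral_const_mul, hsum, mul_one] at hmono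
      exact hmono
    have hclt : Real.exp ((a-1) * Real.log 2) < Real.exp c := by
      apply Real.exp_lt_exp.2
      rw [hc]
      have ha1 : a - 1 < 0 := by linarith [ha.2]
      nlinarith
    have h2pow : (2:ℝ) ^ (a-1) = Real.exp ((a-1) * Real.log 2) := by
      rw [Real.rpow_def_of_pos (by norm_num : (0:ℝ) < 2)]
      ring_nf
    have hGgt : (2:ℝ) ^ (a-1) < ∫ ω, W ω ^ a ∂P := by
      rw [h2pow]; exact lt_of_lt_of_le hclt hints
    rw [h_eq a]
    rw [lt_div_iff₀ (Real.rpow_pos_of_pos (by norm_num) a)]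
    calc (1:ℝ)/2 * 2 ^ a = 2 ^ (a - 1) := by
          rw [Real.rpow_sub (by norm_num : (0:ℝ) < 2), Real.rpow_one]
          ring
      _ < ∫ ω, W ω ^ a ∂P := hGgt
  -- strict antitonicity of h on [0,1]
  have hanti : StrictAntiOn h (Icc (0:ℝ) 1) := by
    intro s hs t ht hst
    rcases eq_or_lt_of_le ht.2 with ht1 | ht1
    · rw [ht1, h_one]
      exact hkey s ⟨hs.1, by rw [← ht1]; exact hst⟩
    · by_contra hle
      push_neg at hle
      set μ : ℝ := (1 - t) / (1 - s) with hμ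
      have hs1 : s < 1 := lt_trans hst ht1
      have hμpos : 0 < μ := div_pos (by linarith) (by linarith)
      have hμlt : μ < 1 := (div_lt_one (by linarith)).2 (by linarith)
      have hs1' : (1:ℝ) - s ≠ 0 := by linarith
      have hμeq : μ * (1 - s) = 1 - t := by rw [hμ]; field_simp
      have hcomb : μ * s + (1 - μ) * 1 = t := by linear_combination -hμeq
      have hb0 : (0:ℝ) ≤ 1 - μ := by linarith
      have hab1 : μ + (1 - μ) = 1 := by ring
      have hcx := hconv.2 hs (right_mem_Icc.2 zero_le_one) hμpos.le hb0 hab1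
      simp only [smul_eq_mul] at hcx
      rw [hcomb, h_one] at hcx
      have hts : h t ≤ μ * h t + (1 - μ) * (1/2) := le_trans hcx (by nlinarith)
      have htgt : 1/2 < h t := hkey t ⟨ht.1, ht1⟩
      nlinarith
  -- main proof
  intro ζ₀ hζ₀
  have h2pos : (0:ℝ) < 2 := by norm_num
  have hy1 : (2:ℝ) ^ (-ζ₀) ≤ 1 := by
    rw [show (1:ℝ) = (2:ℝ) ^ (0:ℝ) by simp]
    exact Real.rpow_le_rpow_of_exponent_le one_le_two (by linarith [hζ₀.1])
  have hy2 : (1:ℝ)/2 ≤ (2:ℝ) ^ (-ζ₀) := by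
    rw [show (1:ℝ)/2 = (2:ℝ) ^ (-1:ℝ) by rw [Real.rpow_neg_one]; norm_num]
    exact Real.rpow_le_rpow_of_exponent_le one_le_two (by linarith [hζ₀.2])
  have hmem : (2:ℝ) ^ (-ζ₀) ∈ Icc (h 1) (h 0) := by
    rw [h_one, h_zero]; exact ⟨hy2, hy1⟩
  obtain ⟨ζ, hζmem, hζeq⟩ := intermediate_value_Icc' (by norm_num : (0:ℝ) ≤ 1) hcont hmem
  have hiff : ∀ z ∈ Icc (0:ℝ) 1,
      ((2:ℝ) ^ ζ₀ = 2 ^ z / ∫ ω, W ω ^ z ∂P ↔ h z = 2 ^ (-ζ₀)) := by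
    intro z hz
    have hG := hGpos z hz
    have h2z : (0:ℝ) < (2:ℝ) ^ z := Real.rpow_pos_of_pos h2pos z
    have h2z0 : (0:ℝ) < (2:ℝ) ^ ζ₀ := Real.rpow_pos_of_pos h2pos ζ₀
    rw [h_eq z, Real.rpow_neg h2pos.le]
    constructor
    · intro hh2
      rw [hh2]
      field_simp
    · intro hh2
      have : (∫ ω, W ω ^ z ∂P) * (2:ℝ) ^ ζ₀ = 2 ^ z := by
        field_simp at hh2
        linarith [hh2]
      field_simp
      linarith [this]
  refine ⟨ζ, ⟨hζmem, (hiff ζ hζmem).2 hζeq⟩, ?_⟩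
  rintro y ⟨hymem, hyeq⟩
  have hy : h y = 2 ^ (-ζ₀) := (hiff y hymem).1 hyeq
  exact hanti.injOn hymem hζmem (by rw [hy, hζeq])
end
end
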